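/- arXiv:2112.13008 — 5 statements merged into one kernel-verified Lean document; each statement's English description precedes it below -/
import Mathlib

section
/- Let f : ℂ → ℂ be the evaluation map of a complex polynomial of degree ≥ 2 which is backward uniformly asymptotically stable. Then lim_{r→0⁺} sup{ diam W : n ∈ ℕ, z ∈ J(f), W a connected component of (f^[n])⁻¹(B(z,r)) } = 0; that is, for every ε > 0 there is r' > 0 such that every connected component of every iterated preimage (f^[n])⁻¹(B(z,r')) with z ∈ J(f) has diameter at most ε. -/
open Filter Metric Set Topology

noncomputable section

/-- `f` is the evaluation map of a complex polynomial of degree at least 2. -/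
def IsPolyEvalDeg2 (f : ℂ → ℂ) : Prop :=
  ∃ p : Polynomial ℂ, 2 ≤ p.natDegree ∧ ∀ z, f z = p.eval z

/-- The filled Julia set of `f`. -/
def filledJulia (f : ℂ → ℂ) : Set ℂ :=
  {z | Bornology.IsBounded (Set.range fun n => f^[n] z)}

/-- The Julia set of `f`. -/
def juliaSet (f : ℂ → ℂ) : Set ℂ := frontier (filledJulia f)

/-- The set of critical points of `f`. -/
def critSet (f : ℂ → ℂ) : Set ℂ := {z | deriv f z = 0}

/-- `z` is non-exceptional. -/
def NonExceptional (f : ℂ → ℂ) (z : ℂ) : Prop :=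
  ∀ ε > 0, ∃ N : ℕ, ∀ n ≥ N, ∀ j, 1 ≤ j → j ≤ n →
    Metric.ball z (Real.exp (-(n : ℝ) * ε)) ∩ (f^[j] '' critSet f) = ∅

/-- `W` is a connected component of `(f^[n])⁻¹(B(z,r))` (a pullback of `B(z,r)` for `f^n`). -/
def IsPullbackComp (f : ℂ → ℂ) (n : ℕ) (z : ℂ) (r : ℝ) (W : Set ℂ) : Prop :=
  ∃ v, v ∈ (f^[n]) ⁻¹' (Metric.ball z r) ∧
    W = connectedComponentIn ((f^[n]) ⁻¹' (Metric.ball z r)) v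

/-- `f` is backward uniformly asymptotically stable: diameters of all pullbacks of balls of
some fixed radius `r₀` centered on the Julia set tend to `0` uniformly as `n → ∞`. -/
def BUAS (f : ℂ → ℂ) : Prop :=
  ∃ r₀ > 0, ∀ ε > 0, ∃ N : ℕ, ∀ n ≥ N, ∀ z ∈ juliaSet f, ∀ W : Set ℂ,
    IsPullbackComp f n z r₀ W → Metric.diam W ≤ ε

/-- The tree pressure `P_tree(f,t,z)`. -/
def treePressure (f : ℂ → ℂ) (t : ℝ) (z : ℂ) : ℝ :=
  Filter.limsup (fun n : ℕ =>
    (1 / (n : ℝ)) * Real.log (∑' v : ((f^[n]) ⁻¹' {z} : Set ℂ),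
      ‖deriv (f^[n]) v‖ ^ (-t))) Filter.atTop

/-- `Y` is an `(n,ε)`-separated set. -/
def IsSepSet (f : ℂ → ℂ) (n : ℕ) (ε : ℝ) (Y : Finset ℂ) : Prop :=
  ∀ y₁ ∈ Y, ∀ y₂ ∈ Y, y₁ ≠ y₂ → ∃ j ≤ n, ε ≤ dist (f^[j] y₁) (f^[j] y₂)

/-- The topological pressure of `f` restricted to `X` with potential `-t log |f'|`,
via `(n,ε)`-separated sets. -/
def pressureOn (f : ℂ → ℂ) (X : Set ℂ) (t : ℝ) : ℝ :=
  Filter.limsup (fun ε : ℝ =>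
    Filter.limsup (fun n : ℕ => (1 / (n : ℝ)) * Real.log
      (sSup {s : ℝ | ∃ Y : Finset ℂ, ↑Y ⊆ X ∧ IsSepSet f n ε Y ∧
        s = ∑ y ∈ Y, ‖deriv (f^[n]) y‖ ^ (-t)})) Filter.atTop)
    (𝓝[>] (0 : ℝ))

/-- `X` is a compact forward-invariant topologically exact hyperbolic subset of the Julia set. -/
def IsHypSubset (f : ℂ → ℂ) (X : Set ℂ) : Prop :=
  IsCompact X ∧ X ⊆ juliaSet f ∧ f '' X ⊆ X ∧
  (∀ U : Set ℂ, IsOpen U → (U ∩ X).Nonempty → ∃ n : ℕ, X ⊆ f^[n] '' (U ∩ X)) ∧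
  ∃ C > 0, ∃ lam > 1, ∀ x ∈ X, ∀ n : ℕ, C * lam ^ n ≤ ‖deriv (f^[n]) x‖

/-- The hyperbolic pressure `P_hyp(f,t)`. -/
def hypPressure (f : ℂ → ℂ) (t : ℝ) : ℝ :=
  sSup {p : ℝ | ∃ X : Set ℂ, IsHypSubset f X ∧ p = pressureOn f X t}


section AuxLemmas
open Polynomial Bornology

/-- Growth lemma: a polynomial map of degree ≥ 2 eventually doubles the norm. -/
lemma poly_growth {f : ℂ → ℂ} (hf : ∃ p : Polynomial ℂ, 2 ≤ p.natDegree ∧ ∀ z, f z = p.eval z) :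
    ∃ R : ℝ, 1 ≤ R ∧ ∀ z : ℂ, R ≤ ‖z‖ → 2 * ‖z‖ ≤ ‖f z‖ := by
  obtain ⟨p, hd, hp⟩ := hf
  set g := p /ₘ (X : Polynomial ℂ) with hg
  have hmon : (X : Polynomial ℂ).Monic := monic_X
  have hdecomp : ∀ z : ℂ, p.eval z = p.eval 0 + z * g.eval z := by
    intro z
    conv_lhs => rw [← modByMonic_add_div p X]
    simp [modByMonic_X, ← hg]
  have hgdeg : 0 < g.degree := by
    rw [← natDegree_pos_iff_degree_pos, hg, natDegree_divByMonic p hmon, natDegree_X]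
    omega
  have htend : Tendsto (fun z : ℂ => ‖g.eval z‖) (cobounded ℂ) atTop :=
    g.tendsto_norm_atTop hgdeg tendsto_norm_cobounded_atTop
  have hev : ∀ᶠ z : ℂ in cobounded ℂ, 2 * ‖z‖ ≤ ‖f z‖ := by
    filter_upwards [htend.eventually_ge_atTop 3,
      tendsto_norm_cobounded_atTop.eventually_ge_atTop ‖p.eval 0‖] with z h3 hc
    have hz0 : (0:ℝ) ≤ ‖z‖ := norm_nonneg z
    have h1 : ‖z * g.eval z‖ = ‖z‖ * ‖g.eval z‖ := norm_mul _ _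
    have h2 : ‖z‖ * ‖g.eval z‖ ≤ ‖p.eval 0 + z * g.eval z‖ + ‖p.eval 0‖ := by
      have := norm_add_le (p.eval 0 + z * g.eval z) (-(p.eval 0))
      simpa [h1] using this
    have h3' : 3 * ‖z‖ ≤ ‖z‖ * ‖g.eval z‖ := by nlinarith
    rw [hp, hdecomp]
    nlinarith
  have hbd : IsBounded {z : ℂ | ¬ 2 * ‖z‖ ≤ ‖f z‖} := by
    rw [isBounded_def]
    simp [compl_setOf]; exact hev
  obtain ⟨M, hM⟩ := hbd.subset_closedBall 0
  refine ⟨max (M + 1) 1, le_max_right _ _, fun z hz => ?_⟩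
  by_contra h
  have := hM h
  rw [mem_closedBall_zero_iff] at this
  have : M + 1 ≤ ‖z‖ := le_trans (le_max_left _ _) hz
  linarith [hM h, mem_closedBall_zero_iff.mp (hM h)]

lemma poly_growth' {f : ℂ → ℂ} (R : ℝ) (hR1 : 1 ≤ R)
    (hR : ∀ z : ℂ, R ≤ ‖z‖ → 2 * ‖z‖ ≤ ‖f z‖) :
    ∀ (S : Set ℂ), IsBounded S → IsBounded (f ⁻¹' S) := by
  intro S hS
  obtain ⟨M, hM⟩ := hS.subset_closedBall 0
  apply (isBounded_closedBall (x := (0:ℂ)) (r := max R M)).subset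
  intro z hz
  rw [mem_closedBall_zero_iff]
  rcases le_or_gt R ‖z‖ with h | h
  · have h1 : 2 * ‖z‖ ≤ ‖f z‖ := hR z h
    have h2 : ‖f z‖ ≤ M := mem_closedBall_zero_iff.mp (hM hz)
    have := norm_nonneg z
    exact le_trans (by linarith) (le_max_right R M)
  · exact le_trans h.le (le_max_left R M)

lemma iter_preimage_bounded {f : ℂ → ℂ} (R : ℝ) (hR1 : 1 ≤ R)
    (hR : ∀ z : ℂ, R ≤ ‖z‖ → 2 * ‖z‖ ≤ ‖f z‖) (n : ℕ) (S : Set ℂ) (hS : IsBounded S) :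
    IsBounded (f^[n] ⁻¹' S) := by
  induction n generalizing S with
  | zero => simpa using hS
  | succ n ih =>
    have : f^[n+1] ⁻¹' S = f^[n] ⁻¹' (f ⁻¹' S) := by
      ext z
      simp only [Set.mem_preimage]
      rw [Function.iterate_succ_apply']
    rw [this]
    exact ih _ (poly_growth' R hR1 hR S hS)

lemma filledJulia_bounded {f : ℂ → ℂ} (R : ℝ) (hR1 : 1 ≤ R)
    (hR : ∀ z : ℂ, R ≤ ‖z‖ → 2 * ‖z‖ ≤ ‖f z‖) :
    {z : ℂ | IsBounded (Set.range fun n => f^[n] z)} ⊆ closedBall 0 R := by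
  intro z hz
  rw [mem_closedBall_zero_iff]
  by_contra h
  push_neg at h
  have hzR : R ≤ ‖z‖ := h.le
  have key : ∀ n : ℕ, 2 ^ n * ‖z‖ ≤ ‖f^[n] z‖ := by
    intro n
    induction n with
    | zero => simp
    | succ n ih =>
      have h1 : R ≤ ‖f^[n] z‖ := by
        have h2 : (1:ℝ) ≤ 2 ^ n := one_le_pow₀ one_le_two
        nlinarith
      rw [Function.iterate_succ_apply']
      have := hR _ h1
      have h3 : 2 * (2 ^ n * ‖z‖) ≤ ‖f (f^[n] z)‖ := by nlinarith
      calc 2 ^ (n+1) * ‖z‖ = 2 * (2 ^ n * ‖z‖) := by ring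
        _ ≤ _ := h3
  have hzb : IsBounded (Set.range fun n => f^[n] z) := hz
  obtain ⟨M, hM⟩ := hzb.subset_closedBall 0
  obtain ⟨n, hn⟩ := pow_unbounded_of_one_lt (M / ‖z‖) (one_lt_two (α := ℝ))
  have hz0 : (0:ℝ) < ‖z‖ := by linarith
  have h1 : ‖f^[n] z‖ ≤ M := mem_closedBall_zero_iff.mp (hM ⟨n, rfl⟩)
  have h2 : M < 2 ^ n * ‖z‖ := by
    rw [div_lt_iff₀ hz0] at hn; linarith
  linarith [key n]

lemma julia_fwd_inv {f : ℂ → ℂ} (hc : Continuous f) :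
    ∀ z ∈ frontier {w : ℂ | IsBounded (Set.range fun n => f^[n] w)},
      f z ∈ frontier {w : ℂ | IsBounded (Set.range fun n => f^[n] w)} := by
  set K := {w : ℂ | IsBounded (Set.range fun n => f^[n] w)} with hK
  have hpre : f ⁻¹' K = K := by
    ext z
    simp only [Set.mem_preimage, hK, Set.mem_setOf_eq]
    constructor
    · intro h
      have : (Set.range fun n => f^[n] z) ⊆ insert z (Set.range fun n => f^[n] (f z)) := by
        rintro _ ⟨n, rfl⟩
        cases n with
        | zero => exact Set.mem_insert _ _
        | succ m => exact Set.mem_insert_of_mem _ ⟨m, (Function.iterate_succ_apply f m z).symm⟩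
      exact (h.insert z).subset this
    · intro h
      have : (Set.range fun n => f^[n] (f z)) ⊆ (Set.range fun n => f^[n] z) := by
        rintro _ ⟨n, rfl⟩
        exact ⟨n + 1, (Function.iterate_succ_apply f n z)⟩
      exact h.subset this
  intro z hz
  have h1 : z ∈ closure (f ⁻¹' K) := by rw [hpre]; exact hz.1
  have h2 : z ∉ interior (f ⁻¹' K) := by rw [hpre]; exact hz.2
  constructor
  · exact hc.closure_preimage_subset K h1
  · intro hmem
    exact h2 (preimage_interior_subset_interior_preimage hc hmem)

end AuxLemmas

/-- for a backward uniformly asymptotically stable polynomial map of degree at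
least `2`, the supremum over all `n` and all `z ∈ J(f)` of the diameters of connected
components of `(f^[n])⁻¹(B(z,r))` tends to `0` as `r → 0⁺`. -/
theorem sup_diam_pullbacks_tendsto_zero (f : ℂ → ℂ) (hf : IsPolyEvalDeg2 f)
    (hbuas : BUAS f) :
    ∀ ε > 0, ∃ r' > 0, ∀ n : ℕ, ∀ z ∈ juliaSet f, ∀ W : Set ℂ,
      IsPullbackComp f n z r' W → Metric.diam W ≤ ε := by
  intro ε hε
  obtain ⟨r₀, hr₀, hB⟩ := hbuas
  obtain ⟨N, hN⟩ := hB ε hε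
  obtain ⟨R, hR1, hR⟩ := poly_growth hf
  obtain ⟨p, hpd, hp⟩ := hf
  have hcf : Continuous f := by
    have : f = fun z => p.eval z := funext hp
    rw [this]; exact p.continuous
  have hJsub : ∀ z ∈ juliaSet f, ‖z‖ ≤ R := by
    intro z hz
    have h1 : filledJulia f ⊆ Metric.closedBall 0 R := filledJulia_bounded R hR1 hR
    have h2 : z ∈ closure (filledJulia f) :=
      frontier_subset_closure (show z ∈ frontier (filledJulia f) from hz)
    exact mem_closedBall_zero_iff.mp
      (closure_minimal h1 Metric.isClosed_closedBall h2)
  have hJinv : ∀ m : ℕ, ∀ z ∈ juliaSet f, f^[m] z ∈ juliaSet f := by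
    intro m
    induction m with
    | zero => intro z hz; simpa using hz
    | succ m ih =>
      intro z hz
      rw [Function.iterate_succ_apply']
      exact julia_fwd_inv hcf _ (ih z hz)
  have hcomp : IsCompact (Metric.closedBall (0:ℂ) (R+1)) := isCompact_closedBall 0 (R+1)
  have hcN : Continuous (f^[N]) := hcf.iterate N
  have huc := hcomp.uniformContinuousOn_of_continuous hcN.continuousOn
  rw [Metric.uniformContinuousOn_iff] at huc
  obtain ⟨δ, hδ, hδ'⟩ := huc r₀ hr₀
  refine ⟨min δ 1, lt_min hδ one_pos, ?_⟩
  intro n z hz W hW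
  obtain ⟨v, hv, hWeq⟩ := hW
  have hinc : (f^[n]) ⁻¹' (Metric.ball z (min δ 1)) ⊆
      (f^[N + n]) ⁻¹' (Metric.ball (f^[N] z) r₀) := by
    intro w hw
    simp only [Set.mem_preimage, Metric.mem_ball] at hw ⊢
    have hzR : ‖z‖ ≤ R := hJsub z hz
    have hzC : z ∈ Metric.closedBall (0:ℂ) (R+1) := by
      rw [mem_closedBall_zero_iff]; linarith
    have hwC : f^[n] w ∈ Metric.closedBall (0:ℂ) (R+1) := by
      rw [mem_closedBall_zero_iff]
      have h1 : dist (f^[n] w) z < 1 := lt_of_lt_of_le hw (min_le_right _ _)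
      have h2 : ‖f^[n] w‖ ≤ dist (f^[n] w) z + ‖z‖ := by
        rw [dist_eq_norm]
        simpa using norm_add_le (f^[n] w - z) z
      linarith
    have h3 := hδ' _ hwC _ hzC (lt_of_lt_of_le hw (min_le_left _ _))
    rw [Function.iterate_add_apply]
    exact h3
  have hvT : v ∈ (f^[N+n]) ⁻¹' (Metric.ball (f^[N] z) r₀) := hinc hv
  have hWsub : W ⊆ connectedComponentIn ((f^[N+n]) ⁻¹' (Metric.ball (f^[N] z) r₀)) v := by
    rw [hWeq]; exact connectedComponentIn_mono v hinc
  have hTbd : Bornology.IsBounded ((f^[N+n]) ⁻¹' (Metric.ball (f^[N] z) r₀)) :=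
    iter_preimage_bounded R hR1 hR (N+n) _ Metric.isBounded_ball
  have hWbd : Bornology.IsBounded (connectedComponentIn ((f^[N+n]) ⁻¹' (Metric.ball (f^[N] z) r₀)) v) :=
    hTbd.subset (connectedComponentIn_subset _ _)
  have hWle : Metric.diam (connectedComponentIn ((f^[N+n]) ⁻¹' (Metric.ball (f^[N] z) r₀)) v) ≤ ε :=
    hN (N+n) (Nat.le_add_right N n) (f^[N] z) (hJinv N z hz) _ ⟨v, hvT, rfl⟩
  exact le_trans (Metric.diam_mono hWsub hWbd) hWle

end
end

section
/- Let f : ℂ → ℂ be the evaluation map of a nonconstant complex polynomial. For every δ > 0 there exists δ' > 0 such that for every z ∈ ℂ, every connected component of f⁻¹(B(z, δ')) has diameter at most δ. -/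
open Filter Metric Set Topology

noncomputable section

private lemma aux_pow_card_le_prod (m : Multiset ℝ) {s : ℝ} (hs : 0 ≤ s)
    (h : ∀ x ∈ m, s ≤ x) : s ^ Multiset.card m ≤ m.prod := by
  induction m using Multiset.induction with
  | empty => simp
  | cons a m ih =>
    have ha : s ≤ a := h a (Multiset.mem_cons_self a m)
    have hm : s ^ Multiset.card m ≤ m.prod :=
      ih (fun x hx => h x (Multiset.mem_cons_of_mem hx))
    have hmp : 0 ≤ s ^ Multiset.card m := pow_nonneg hs _
    rw [Multiset.prod_cons, Multiset.card_cons, pow_succ]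
    calc s ^ Multiset.card m * s ≤ m.prod * a :=
          mul_le_mul hm ha hs (hmp.trans hm)
      _ = a * m.prod := mul_comm _ _

/-- A preconnected set covered by `k` open balls of radius `s` has diameter at most `2*s*k`. -/
private lemma aux_chain_diam {s : ℝ} (hs : 0 < s) (t : Finset ℂ) {S : Set ℂ}
    (hS : IsPreconnected S) (hsub : S ⊆ ⋃ c ∈ t, Metric.ball c s) :
    Metric.diam S ≤ 2 * s * t.card := by
  classical
  apply Metric.diam_le_of_forall_dist_le (by positivity)
  intro x hx y hy
  obtain ⟨cx, hcxt, hxcx⟩ : ∃ c ∈ t, x ∈ Metric.ball c s := by simpa using hsub hx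
  obtain ⟨cy, hcyt, hycy⟩ : ∃ c ∈ t, y ∈ Metric.ball c s := by simpa using hsub hy
  let G : SimpleGraph {c // c ∈ t} :=
    { Adj := fun i j => i ≠ j ∧ (S ∩ Metric.ball (i : ℂ) s ∩ Metric.ball (j : ℂ) s).Nonempty
      symm := by
        constructor
        rintro i j ⟨hne, w, ⟨⟨hwS, hwi⟩, hwj⟩⟩
        exact ⟨hne.symm, w, ⟨hwS, hwj⟩, hwi⟩
      loopless := ⟨fun i h => h.1 rfl⟩ }
  have walk_bound : ∀ {u v : {c // c ∈ t}} (W : G.Walk u v),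
      dist (u : ℂ) (v : ℂ) ≤ 2 * s * W.length := by
    intro u v W
    induction W with
    | nil => simp
    | @cons u u' v h W ih =>
      obtain ⟨-, w, ⟨⟨-, hwi⟩, hwj⟩⟩ := id h
      have hd : dist (u : ℂ) (u' : ℂ) ≤ 2 * s := by
        have h1 : dist (u : ℂ) w ≤ s := by
          rw [dist_comm]; exact (Metric.mem_ball.mp hwi).le
        have h2 : dist w (u' : ℂ) ≤ s := (Metric.mem_ball.mp hwj).le
        calc dist (u : ℂ) (u' : ℂ) ≤ dist (u : ℂ) w + dist w (u' : ℂ) := dist_triangle _ _ _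
          _ ≤ 2 * s := by linarith
      calc dist (u : ℂ) (v : ℂ) ≤ dist (u : ℂ) (u' : ℂ) + dist (u' : ℂ) (v : ℂ) :=
            dist_triangle _ _ _
        _ ≤ 2 * s + 2 * s * W.length := add_le_add hd ih
        _ = 2 * s * ((W.length : ℝ) + 1) := by ring
        _ = 2 * s * ((SimpleGraph.Walk.cons h W).length : ℝ) := by
            rw [SimpleGraph.Walk.length_cons]; push_cast; ring
  have reach : G.Reachable ⟨cx, hcxt⟩ ⟨cy, hcyt⟩ := by
    by_contra hnr
    set a : {c // c ∈ t} := ⟨cx, hcxt⟩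
    have key := hS
      (⋃ (i : {c // c ∈ t}) (_ : G.Reachable a i), Metric.ball (i : ℂ) s)
      (⋃ (i : {c // c ∈ t}) (_ : ¬ G.Reachable a i), Metric.ball (i : ℂ) s)
      (isOpen_iUnion fun i => isOpen_iUnion fun _ => Metric.isOpen_ball)
      (isOpen_iUnion fun i => isOpen_iUnion fun _ => Metric.isOpen_ball)
      (by
        intro w hw
        obtain ⟨c, hct, hwc⟩ : ∃ c ∈ t, w ∈ Metric.ball c s := by simpa using hsub hw
        by_cases hr : G.Reachable a ⟨c, hct⟩
        · exact Or.inl (Set.mem_iUnion.mpr ⟨⟨c, hct⟩, Set.mem_iUnion.mpr ⟨hr, hwc⟩⟩)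
        · exact Or.inr (Set.mem_iUnion.mpr ⟨⟨c, hct⟩, Set.mem_iUnion.mpr ⟨hr, hwc⟩⟩))
      ⟨x, hx, Set.mem_iUnion.mpr ⟨a, Set.mem_iUnion.mpr ⟨SimpleGraph.Reachable.refl a, hxcx⟩⟩⟩
      ⟨y, hy, Set.mem_iUnion.mpr ⟨⟨cy, hcyt⟩, Set.mem_iUnion.mpr ⟨hnr, hycy⟩⟩⟩
    obtain ⟨w, hwS, hwU, hwV⟩ := key
    obtain ⟨i, hiU⟩ := Set.mem_iUnion.mp hwU
    obtain ⟨hi, hwi⟩ := Set.mem_iUnion.mp hiU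
    obtain ⟨j, hjV⟩ := Set.mem_iUnion.mp hwV
    obtain ⟨hj, hwj⟩ := Set.mem_iUnion.mp hjV
    have hij : i ≠ j := by rintro rfl; exact hj hi
    exact hj (hi.trans (SimpleGraph.Adj.reachable ⟨hij, w, ⟨hwS, hwi⟩, hwj⟩))
  obtain ⟨W⟩ := reach
  have hP : W.bypass.IsPath := SimpleGraph.Walk.bypass_isPath W
  have hlen : W.bypass.length < t.card := by
    have := hP.length_lt
    rwa [Fintype.card_coe] at this
  have hcard1 : 1 ≤ t.card := Finset.card_pos.mpr ⟨cx, hcxt⟩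
  have hlenR : (W.bypass.length : ℝ) ≤ (t.card : ℝ) - 1 := by
    have : W.bypass.length + 1 ≤ t.card := hlen
    have := Nat.cast_le (α := ℝ).mpr this
    push_cast at this ⊢
    linarith
  have hmid : dist (cx : ℂ) (cy : ℂ) ≤ 2 * s * ((t.card : ℝ) - 1) := by
    calc dist (cx : ℂ) cy ≤ 2 * s * W.bypass.length := walk_bound W.bypass
      _ ≤ 2 * s * ((t.card : ℝ) - 1) := by nlinarith
  calc dist x y ≤ dist x cx + dist cx cy + dist cy y := dist_triangle4 _ _ _ _
    _ ≤ s + 2 * s * ((t.card : ℝ) - 1) + s := by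
        have h1 : dist x cx ≤ s := (Metric.mem_ball.mp hxcx).le
        have h2 : dist cy y ≤ s := by rw [dist_comm]; exact (Metric.mem_ball.mp hycy).le
        linarith
    _ = 2 * s * t.card := by ring

/-- for the evaluation map of a nonconstant complex polynomial, for every
`δ > 0` there is `δ' > 0` such that for every `z ∈ ℂ` each connected component of
`f⁻¹(B(z,δ'))` has diameter at most `δ`. -/
theorem diam_preimage_component_small (f : ℂ → ℂ) (p : Polynomial ℂ)
    (hdeg : 0 < p.natDegree) (hf : ∀ z, f z = p.eval z) :
    ∀ δ > 0, ∃ δ' > 0, ∀ z : ℂ, ∀ v ∈ f ⁻¹' (Metric.ball z δ'),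
      Metric.diam (connectedComponentIn (f ⁻¹' (Metric.ball z δ')) v) ≤ δ := by
  classical
  intro δ hδ
  have hp0 : p ≠ 0 := fun h => by simp [h] at hdeg
  set d := p.natDegree with hd
  have ha : p.leadingCoeff ≠ 0 := Polynomial.leadingCoeff_ne_zero.mpr hp0
  have haabs : 0 < ‖p.leadingCoeff‖ := norm_pos_iff.mpr ha
  set s : ℝ := δ / (2 * d) with hs_def
  have hs : 0 < s := by
    apply div_pos hδ
    have : (0 : ℝ) < d := by exact_mod_cast hdeg
    linarith
  refine ⟨‖p.leadingCoeff‖ * s ^ d, by positivity, ?_⟩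
  intro z v hv
  set δ' := ‖p.leadingCoeff‖ * s ^ d with hδ'
  set q := p - Polynomial.C z with hq
  have hqdeg : q.natDegree = d := Polynomial.natDegree_sub_C
  have hq0 : q ≠ 0 := by
    intro h
    rw [h, Polynomial.natDegree_zero] at hqdeg
    omega
  have hlc : q.leadingCoeff = p.leadingCoeff := by
    rw [Polynomial.leadingCoeff, hqdeg, hq, Polynomial.coeff_sub,
      Polynomial.coeff_C, if_neg (by omega : ¬ d = 0), sub_zero]
    rfl
  have hsplits : Polynomial.Splits q := IsAlgClosed.splits q
  have hcard : Multiset.card q.roots = d := by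
    rw [← hqdeg]
    exact Polynomial.splits_iff_card_roots.mp hsplits
  -- the preimage of the small ball is contained in the union of balls around the roots
  have hsub : f ⁻¹' Metric.ball z δ' ⊆ ⋃ c ∈ q.roots.toFinset, Metric.ball c s := by
    intro w hw
    have hwball : ‖p.eval w - z‖ < δ' := by
      have : dist (f w) z < δ' := Metric.mem_ball.mp hw
      rwa [hf, Complex.dist_eq] at this
    by_contra hcon
    simp only [Set.mem_iUnion, Metric.mem_ball, not_exists, not_and, Multiset.mem_toFinset,
      exists_prop, not_lt] at hcon
    -- every root is at distance ≥ s from w, so |q(w)| ≥ |a| * s^d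
    have hevalq : q.eval w = q.leadingCoeff * (Multiset.map (fun r => w - r) q.roots).prod := by
      conv_lhs => rw [hsplits.eq_prod_roots]
      simp [Polynomial.eval_multiset_prod, Multiset.map_map, Function.comp]
    have habs : ‖q.eval w‖ =
        ‖q.leadingCoeff‖ * (Multiset.map (fun r => ‖w - r‖) q.roots).prod := by
      rw [hevalq, norm_mul, show ‖(Multiset.map (fun r => w - r) q.roots).prod‖ = _ from map_multiset_prod (normHom : ℂ →*₀ ℝ) _, Multiset.map_map]
      rfl
    have hprod : s ^ d ≤ (Multiset.map (fun r => ‖w - r‖) q.roots).prod := by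
      have := aux_pow_card_le_prod (Multiset.map (fun r => ‖w - r‖) q.roots) hs.le
        (by
          intro x hx
          obtain ⟨r, hr, rfl⟩ := Multiset.mem_map.mp hx
          have := hcon r hr
          rwa [Complex.dist_eq] at this)
      rwa [Multiset.card_map, hcard] at this
    have hlow : δ' ≤ ‖q.eval w‖ := by
      rw [habs, hlc, hδ']
      exact mul_le_mul_of_nonneg_left hprod haabs.le
    have : q.eval w = p.eval w - z := by simp [hq]
    rw [this] at hlow
    linarith
  -- apply the chain lemma
  have hpre : IsPreconnected (connectedComponentIn (f ⁻¹' Metric.ball z δ') v) :=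
    isPreconnected_connectedComponentIn
  have hsubS : connectedComponentIn (f ⁻¹' Metric.ball z δ') v ⊆
      ⋃ c ∈ q.roots.toFinset, Metric.ball c s :=
    (connectedComponentIn_subset _ _).trans hsub
  refine (aux_chain_diam hs q.roots.toFinset hpre hsubS).trans ?_
  have hcard' : (q.roots.toFinset.card : ℝ) ≤ (d : ℝ) := by
    have := Multiset.toFinset_card_le q.roots
    rw [hcard] at this
    exact_mod_cast this
  have hdpos : (0 : ℝ) < d := by exact_mod_cast hdeg
  calc 2 * s * q.roots.toFinset.card ≤ 2 * s * d := by nlinarith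
    _ = δ := by rw [hs_def]; field_simp

end
end

section
/- Let f : ℂ → ℂ be the evaluation map of a complex polynomial of degree ≥ 2 which is backward uniformly asymptotically stable, and let z ∈ J(f) be non-exceptional. Then there is r₁ > 0 such that for every r ∈ (0, r₁] and every ε > 0 there exists a constant C > 0 with: for every n ∈ ℕ and every v ∈ (f^[n])⁻¹{z}, diam(W)·|deriv (f^[n]) v| ≥ C·exp(−n·ε), where W is the connected component of (f^[n])⁻¹(B(z,r)) containing v. -/
open Filter Metric Set Topology

noncomputable section

namespace Statement10Aux

open Bornology

lemma strictDeriv (F : ℂ → ℂ) (hF : Differentiable ℂ F) (x : ℂ) :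
    HasStrictDerivAt F (deriv F x) x := by
  have h := (hF.analyticAt x).hasStrictFDerivAt.hasStrictDerivAt
  simpa using h

/-- Existence of a holomorphic inverse branch of `F` on a disk free of critical values,
through a given preimage point `v` of the center. -/
lemma exists_branch (F : ℂ → ℂ) (hF : Differentiable ℂ F) (z v : ℂ) (δ : ℝ)
    (hδ : 0 < δ) (hFv : F v = z)
    (hbdd : IsBounded (F ⁻¹' Metric.closedBall z δ))
    (hcrit : ∀ x : ℂ, F x ∈ Metric.closedBall z δ → deriv F x ≠ 0) :
    ∃ g : ℂ → ℂ, DifferentiableOn ℂ g (Metric.ball z δ) ∧ g z = v ∧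
      ∀ w ∈ Metric.ball z δ, F (g w) = w := by
  classical
  set K : Set ℂ := F ⁻¹' Metric.closedBall z δ with hK
  have hKcl : IsClosed K := Metric.isClosed_closedBall.preimage hF.continuous
  have hKc : IsCompact K := Metric.isCompact_of_isClosed_isBounded hKcl hbdd
  have hvK : v ∈ K := by
    simp only [hK, Set.mem_preimage, hFv]
    exact Metric.mem_closedBall_self hδ.le
  -- uniform injectivity radius
  have hinj0 : ∀ x : K, ∃ s > 0, Set.InjOn F (Metric.ball (x : ℂ) s) := by
    intro x
    have hd := strictDeriv F hF (x : ℂ)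
    have hne := hcrit _ x.2
    have hev := (hd.hasStrictFDerivAt_equiv hne).eventually_left_inverse
    rcases Metric.eventually_nhds_iff_ball.mp hev with ⟨s, hs, hball⟩
    exact ⟨s, hs, fun a ha b hb hab => by rw [← hball a ha, ← hball b hb, hab]⟩
  choose s hs hinj using hinj0
  have hcov1 : K ⊆ ⋃ x : K, Metric.ball (x : ℂ) (s x / 2) := fun y hy =>
    Set.mem_iUnion.mpr ⟨⟨y, hy⟩, Metric.mem_ball_self (half_pos (hs _))⟩
  obtain ⟨t₁, ht₁⟩ := hKc.elim_finite_subcover _ (fun _ => Metric.isOpen_ball) hcov1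
  have ht₁ne : t₁.Nonempty := by
    rcases Set.mem_iUnion₂.mp (ht₁ hvK) with ⟨i, hi, _⟩
    exact ⟨i, hi⟩
  set σ : ℝ := t₁.inf' ht₁ne (fun x => s x / 2) with hσ
  have hσpos : 0 < σ := by
    rw [hσ, Finset.lt_inf'_iff]
    exact fun i _ => half_pos (hs i)
  have hU1 : ∀ p ∈ K, Set.InjOn F (Metric.ball p σ) := by
    intro p hp
    rcases Set.mem_iUnion₂.mp (ht₁ hp) with ⟨i, hit, hpi⟩
    refine (hinj i).mono fun y hy => ?_
    have h1 : σ ≤ s i / 2 := Finset.inf'_le _ hit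
    have h2 : dist y (i : ℂ) ≤ dist y p + dist p (i : ℂ) := dist_triangle _ _ _
    have h3 : dist y p < σ := Metric.mem_ball.mp hy
    have h4 : dist p (i : ℂ) < s i / 2 := Metric.mem_ball.mp hpi
    exact Metric.mem_ball.mpr (by linarith)
  -- uniform local surjectivity data
  have hloc : ∀ x : K, ∃ ρ > 0, ∃ ε' > 0, ∃ φ : ℂ → ℂ, ε' ≤ σ / 8 ∧
      (∀ y ∈ Metric.ball (F (x : ℂ)) ρ, F (φ y) = y ∧ φ y ∈ Metric.ball (x : ℂ) (σ / 8)) ∧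
      (∀ q ∈ Metric.ball (x : ℂ) ε', F q ∈ Metric.ball (F (x : ℂ)) (ρ / 2)) := by
    intro x
    have hd := strictDeriv F hF (x : ℂ)
    have hne := hcrit _ x.2
    have e := hd.hasStrictFDerivAt_equiv hne
    set φ := e.localInverse _ _ _ with hφdef
    have h1 : ∀ᶠ y in nhds (F (x : ℂ)), F (φ y) = y := e.eventually_right_inverse
    have hφx : φ (F (x : ℂ)) = (x : ℂ) := e.localInverse_apply_image
    have hcont : ContinuousAt φ (F (x : ℂ)) := e.localInverse_continuousAt
    have h2 : ∀ᶠ y in nhds (F (x : ℂ)), φ y ∈ Metric.ball (x : ℂ) (σ / 8) := by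
      have hmem : Metric.ball (x : ℂ) (σ / 8) ∈ nhds (φ (F (x : ℂ))) := by
        rw [hφx]; exact Metric.ball_mem_nhds _ (by positivity)
      exact hcont hmem
    rcases Metric.eventually_nhds_iff_ball.mp (h1.and h2) with ⟨ρ, hρ, hball⟩
    have hc : ∀ᶠ q in nhds (x : ℂ), F q ∈ Metric.ball (F (x : ℂ)) (ρ / 2) :=
      hF.continuous.continuousAt (Metric.ball_mem_nhds _ (by positivity))
    rcases Metric.eventually_nhds_iff_ball.mp hc with ⟨ε', hε', hball2⟩
    refine ⟨ρ, hρ, min ε' (σ / 8), by positivity, φ, min_le_right _ _,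
      fun y hy => hball y hy, fun q hq => hball2 q ?_⟩
    exact Metric.ball_subset_ball (min_le_left _ _) hq
  choose ρ hρ ε' hε' φ hεσ hφprop hFmap using hloc
  have hcov2 : K ⊆ ⋃ x : K, Metric.ball (x : ℂ) (ε' x) := fun y hy =>
    Set.mem_iUnion.mpr ⟨⟨y, hy⟩, Metric.mem_ball_self (hε' _)⟩
  obtain ⟨t₂, ht₂⟩ := hKc.elim_finite_subcover _ (fun _ => Metric.isOpen_ball) hcov2
  have ht₂ne : t₂.Nonempty := by
    rcases Set.mem_iUnion₂.mp (ht₂ hvK) with ⟨i, hi, _⟩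
    exact ⟨i, hi⟩
  set r : ℝ := t₂.inf' ht₂ne (fun x => ρ x / 2) with hrdef
  have hrpos : 0 < r := by
    rw [hrdef, Finset.lt_inf'_iff]
    exact fun i _ => half_pos (hρ i)
  have hU2 : ∀ p ∈ K, ∀ y ∈ Metric.ball (F p) r, ∃ q, q ∈ Metric.ball p (σ / 4) ∧ F q = y := by
    intro p hp y hy
    rcases Set.mem_iUnion₂.mp (ht₂ hp) with ⟨i, hit, hpi⟩
    have hFp : F p ∈ Metric.ball (F (i : ℂ)) (ρ i / 2) := hFmap i p hpi
    have hyball : y ∈ Metric.ball (F (i : ℂ)) (ρ i) := by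
      have h1 : r ≤ ρ i / 2 := Finset.inf'_le _ hit
      have h2 : dist y (F (i : ℂ)) ≤ dist y (F p) + dist (F p) (F (i : ℂ)) := dist_triangle _ _ _
      have h3 : dist y (F p) < r := Metric.mem_ball.mp hy
      have h4 : dist (F p) (F (i : ℂ)) < ρ i / 2 := Metric.mem_ball.mp hFp
      exact Metric.mem_ball.mpr (by linarith)
    obtain ⟨hFq, hqmem⟩ := hφprop i y hyball
    refine ⟨φ i y, ?_, hFq⟩
    have h2 : ε' i ≤ σ / 8 := hεσ i
    have h3 : dist (φ i y) p ≤ dist (φ i y) (i : ℂ) + dist (i : ℂ) p := dist_triangle _ _ _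
    have h4 : dist (φ i y) (i : ℂ) < σ / 8 := Metric.mem_ball.mp hqmem
    have h5 : dist (i : ℂ) p < ε' i := by rw [dist_comm]; exact Metric.mem_ball.mp hpi
    exact Metric.mem_ball.mpr (by linarith)
  -- number of steps
  obtain ⟨M, hM⟩ := exists_nat_gt (δ / r)
  have hMpos : 0 < (M : ℝ) := lt_trans (div_pos hδ hrpos) hM
  have hM0 : (M : ℂ) ≠ 0 := by
    have : M ≠ 0 := by exact_mod_cast hMpos.ne'
    exact_mod_cast this
  set c : ℕ → ℂ → ℂ := fun k w => z + ((k : ℂ) / (M : ℂ)) * (w - z) with hc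
  have hcdiff : ∀ k, Differentiable ℂ (c k) := fun k =>
    (differentiable_const _).add ((differentiable_id.sub (differentiable_const _)).const_mul _)
  have hnormdiv : ∀ k : ℕ, ‖((k : ℂ) / (M : ℂ))‖ = (k : ℝ) / (M : ℝ) := by
    intro k
    rw [norm_div, RCLike.norm_natCast, RCLike.norm_natCast]
  have hcball : ∀ k, k ≤ M → ∀ w ∈ Metric.ball z δ, c k w ∈ Metric.ball z δ := by
    intro k hk w hw
    have h1 : c k w - z = ((k : ℂ) / (M : ℂ)) * (w - z) := by simp [hc]
    have h2 : dist (c k w) z = ((k : ℝ) / (M : ℝ)) * ‖w - z‖ := by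
      rw [dist_eq_norm, h1, norm_mul, hnormdiv]
    have h3 : (k : ℝ) / (M : ℝ) ≤ 1 := by
      rw [div_le_one hMpos]; exact_mod_cast hk
    have h4 : ‖w - z‖ < δ := by rw [← dist_eq_norm]; exact Metric.mem_ball.mp hw
    rw [Metric.mem_ball, h2]
    calc ((k : ℝ) / (M : ℝ)) * ‖w - z‖ ≤ 1 * ‖w - z‖ :=
          mul_le_mul_of_nonneg_right h3 (norm_nonneg _)
      _ = ‖w - z‖ := one_mul _
      _ < δ := h4
  have hδM : δ / (M : ℝ) < r := by
    rw [div_lt_iff₀ hMpos]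
    have := (div_lt_iff₀ hrpos).mp hM
    linarith
  have hstep : ∀ (k : ℕ), ∀ w ∈ Metric.ball z δ, dist (c (k + 1) w) (c k w) < r := by
    intro k w hw
    have h1 : c (k + 1) w - c k w = ((1 : ℂ) / (M : ℂ)) * (w - z) := by
      simp only [hc]
      push_cast
      ring
    have h2 : ‖(1 : ℂ) / (M : ℂ)‖ = 1 / (M : ℝ) := by
      rw [norm_div, norm_one, RCLike.norm_natCast]
    have h3 : dist (c (k + 1) w) (c k w) = (1 / (M : ℝ)) * ‖w - z‖ := by
      rw [dist_eq_norm, h1, norm_mul, h2]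
    have h4 : ‖w - z‖ < δ := by rw [← dist_eq_norm]; exact Metric.mem_ball.mp hw
    rw [h3]
    calc (1 / (M : ℝ)) * ‖w - z‖ < (1 / (M : ℝ)) * δ :=
          mul_lt_mul_of_pos_left h4 (by positivity)
      _ = δ / (M : ℝ) := by ring
      _ < r := hδM
  have hcz : ∀ j, c j z = z := fun j => by simp [hc]
  -- main induction on steps
  have main : ∀ k, k ≤ M → ∃ G : ℂ → ℂ, G z = v ∧
      (∀ w ∈ Metric.ball z δ, F (G w) = c k w) ∧ DifferentiableOn ℂ G (Metric.ball z δ) := by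
    intro k
    induction k with
    | zero =>
      intro _
      refine ⟨fun _ => v, rfl, fun w _ => ?_, differentiableOn_const _⟩
      simp [hc, hFv]
    | succ k ih =>
      intro hk1
      obtain ⟨G, hGz, hGF, hGd⟩ := ih (Nat.le_of_succ_le hk1)
      have hGK : ∀ w ∈ Metric.ball z δ, G w ∈ K := by
        intro w hw
        simp only [hK, Set.mem_preimage, hGF w hw]
        exact Metric.ball_subset_closedBall (hcball k (Nat.le_of_succ_le hk1) w hw)
      have hex : ∀ w ∈ Metric.ball z δ, ∃ q, q ∈ Metric.ball (G w) (σ / 4) ∧ F q = c (k + 1) w := by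
        intro w hw
        apply hU2 (G w) (hGK w hw)
        rw [hGF w hw]
        exact Metric.mem_ball.mpr (hstep k w hw)
      set G' : ℂ → ℂ := fun w => if h : w ∈ Metric.ball z δ then (hex w h).choose else v with hG'def
      have hG'spec : ∀ w (h : w ∈ Metric.ball z δ),
          G' w ∈ Metric.ball (G w) (σ / 4) ∧ F (G' w) = c (k + 1) w := by
        intro w h
        simp only [hG'def, dif_pos h]
        exact (hex w h).choose_spec
      have hzb : z ∈ Metric.ball z δ := Metric.mem_ball_self hδ
      have hG'K : ∀ w ∈ Metric.ball z δ, G' w ∈ K := by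
        intro w hw
        simp only [hK, Set.mem_preimage, (hG'spec w hw).2]
        exact Metric.ball_subset_closedBall (hcball (k + 1) hk1 w hw)
      have hG'z : G' z = v := by
        have h1 := hG'spec z hzb
        have h2 : F (G' z) = F v := by rw [h1.2, hcz, hFv]
        have h3 : G' z ∈ Metric.ball v σ := by
          have h4 := h1.1
          rw [hGz] at h4
          exact Metric.ball_subset_ball (by linarith) h4
        exact hU1 v hvK h3 (Metric.mem_ball_self hσpos) h2
      have hG'd : DifferentiableOn ℂ G' (Metric.ball z δ) := by
        intro w₀ hw₀
        have hx₀K : G' w₀ ∈ K := hG'K w₀ hw₀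
        have hd := strictDeriv F hF (G' w₀)
        have hne := hcrit _ hx₀K
        have e := hd.hasStrictFDerivAt_equiv hne
        set ψ := e.localInverse _ _ _ with hψdef
        have hψx : ψ (F (G' w₀)) = G' w₀ := e.localInverse_apply_image
        have hccont : ContinuousAt (c (k + 1)) w₀ := ((hcdiff (k + 1)) w₀).continuousAt
        have hcw : c (k + 1) w₀ = F (G' w₀) := ((hG'spec w₀ hw₀).2).symm
        have E1 : ∀ᶠ w in nhds w₀, w ∈ Metric.ball z δ :=
          Metric.isOpen_ball.eventually_mem hw₀
        have E2 : ∀ᶠ w in nhds w₀, F (ψ (c (k + 1) w)) = c (k + 1) w := by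
          have h := e.eventually_right_inverse
          rw [← hcw] at h
          exact hccont.eventually h
        have E3 : ∀ᶠ w in nhds w₀, ψ (c (k + 1) w) ∈ Metric.ball (G' w₀) (σ / 4) := by
          have hψcont : ContinuousAt ψ (c (k + 1) w₀) := by
            rw [hcw]; exact e.localInverse_continuousAt
          have htd : Filter.Tendsto (fun w => ψ (c (k + 1) w)) (nhds w₀) (nhds (G' w₀)) := by
            have h : Filter.Tendsto (fun w => ψ (c (k + 1) w)) (nhds w₀)
                (nhds (ψ (c (k + 1) w₀))) := hψcont.comp hccont
            have heq : ψ (c (k + 1) w₀) = G' w₀ := by rw [hcw, hψx]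
            rwa [heq] at h
          exact htd.eventually_mem (Metric.ball_mem_nhds _ (by positivity))
        have E4 : ∀ᶠ w in nhds w₀, G w ∈ Metric.ball (G w₀) (σ / 4) := by
          have hGc : ContinuousAt G w₀ :=
            (hGd.differentiableAt (Metric.isOpen_ball.mem_nhds hw₀)).continuousAt
          exact hGc.eventually_mem (Metric.ball_mem_nhds _ (by positivity))
        have key : ∀ᶠ w in nhds w₀, G' w = ψ (c (k + 1) w) := by
          filter_upwards [E1, E2, E3, E4] with w h1 h2 h3 h4
          have hs1 := hG'spec w h1
          have ha : G' w ∈ Metric.ball (G w₀) σ := by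
            have d1 : dist (G' w) (G w) < σ / 4 := Metric.mem_ball.mp hs1.1
            have d2 : dist (G w) (G w₀) < σ / 4 := Metric.mem_ball.mp h4
            have d3 := dist_triangle (G' w) (G w) (G w₀)
            exact Metric.mem_ball.mpr (by linarith)
          have hb : ψ (c (k + 1) w) ∈ Metric.ball (G w₀) σ := by
            have d1 : dist (ψ (c (k + 1) w)) (G' w₀) < σ / 4 := Metric.mem_ball.mp h3
            have d2 : dist (G' w₀) (G w₀) < σ / 4 := Metric.mem_ball.mp (hG'spec w₀ hw₀).1
            have d3 := dist_triangle (ψ (c (k + 1) w)) (G' w₀) (G w₀)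
            exact Metric.mem_ball.mpr (by linarith)
          have hFeq : F (G' w) = F (ψ (c (k + 1) w)) := by rw [hs1.2, h2]
          exact hU1 (G w₀) (hGK w₀ hw₀) ha hb hFeq
        have hψdiff : DifferentiableAt ℂ ψ (c (k + 1) w₀) := by
          rw [hcw]
          exact e.to_localInverse.differentiableAt
        have hcomp : DifferentiableAt ℂ (fun w => ψ (c (k + 1) w)) w₀ :=
          hψdiff.comp w₀ ((hcdiff (k + 1)) w₀)
        exact (hcomp.congr_of_eventuallyEq key).differentiableWithinAt
      exact ⟨G', hG'z, fun w hw => (hG'spec w hw).2, hG'd⟩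
  obtain ⟨G, hGz, hGF, hGd⟩ := main M le_rfl
  refine ⟨G, hGd, hGz, fun w hw => ?_⟩
  rw [hGF w hw]
  simp only [hc]
  rw [div_self hM0, one_mul]
  ring

/-- The key lower bound: `δ ≤ diam W ⬝ |F'(v)|` via the Schwarz lemma applied to an
inverse branch. -/
lemma key_bound (F : ℂ → ℂ) (hF : Differentiable ℂ F) (z v : ℂ) (δ r : ℝ)
    (hδ : 0 < δ) (hδr : δ ≤ r) (hFv : F v = z)
    (hbdd : IsBounded (F ⁻¹' Metric.closedBall z r))
    (hcrit : ∀ x : ℂ, F x ∈ Metric.closedBall z δ → deriv F x ≠ 0) :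
    δ ≤ Metric.diam (connectedComponentIn (F ⁻¹' Metric.ball z r) v) *
      ‖deriv F v‖ := by
  have hbdd' : IsBounded (F ⁻¹' Metric.closedBall z δ) :=
    hbdd.subset (Set.preimage_mono (Metric.closedBall_subset_closedBall hδr))
  obtain ⟨g, hgd, hgz, hgF⟩ := exists_branch F hF z v δ hδ hFv hbdd' hcrit
  set W := connectedComponentIn (F ⁻¹' Metric.ball z r) v with hW
  have hrpos : 0 < r := lt_of_lt_of_le hδ hδr
  have hvpre : v ∈ F ⁻¹' Metric.ball z r := by
    simp only [Set.mem_preimage, hFv]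
    exact Metric.mem_ball_self hrpos
  have hvW : v ∈ W := mem_connectedComponentIn hvpre
  have himg : g '' Metric.ball z δ ⊆ W := by
    apply IsPreconnected.subset_connectedComponentIn
    · exact (convex_ball z δ).isPreconnected.image g hgd.continuousOn
    · exact ⟨z, Metric.mem_ball_self hδ, hgz⟩
    · rintro y ⟨w, hw, rfl⟩
      simp only [Set.mem_preimage]
      rw [hgF w hw]
      exact Metric.ball_subset_ball hδr hw
  have hWsub : W ⊆ F ⁻¹' Metric.closedBall z r :=
    (connectedComponentIn_subset _ _).trans (Set.preimage_mono Metric.ball_subset_closedBall)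
  have hWb : IsBounded W := hbdd.subset hWsub
  have hzb : z ∈ Metric.ball z δ := Metric.mem_ball_self hδ
  have hgdz : DifferentiableAt ℂ g z := hgd.differentiableAt (Metric.isOpen_ball.mem_nhds hzb)
  have hFg : HasDerivAt (F ∘ g) (deriv F v * deriv g z) z := by
    have h1 : HasDerivAt F (deriv F v) (g z) := by
      rw [hgz]; exact (hF v).hasDerivAt
    exact h1.comp z hgdz.hasDerivAt
  have hid : HasDerivAt (F ∘ g) 1 z := by
    have hev : (F ∘ g) =ᶠ[nhds z] id := by
      filter_upwards [Metric.isOpen_ball.eventually_mem hzb] with w hw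
      exact hgF w hw
    exact (hasDerivAt_id z).congr_of_eventuallyEq hev
  have huniq : deriv F v * deriv g z = 1 := hFg.unique hid
  have habs : ‖deriv F v‖ * ‖deriv g z‖ = 1 := by
    rw [← norm_mul, huniq, norm_one]
  have hane : deriv F v ≠ 0 := hcrit v (by rw [hFv]; exact Metric.mem_closedBall_self hδ.le)
  have hapos : 0 < ‖deriv F v‖ := norm_pos_iff.mpr hane
  set D := Metric.diam W with hD
  have hDnn : 0 ≤ D := Metric.diam_nonneg
  have hkey : ∀ η > 0, ‖deriv g z‖ ≤ (D + η) / δ := by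
    intro η hη
    have hmaps : Set.MapsTo g (Metric.ball z δ) (Metric.ball (g z) (D + η)) := by
      intro w hw
      rw [hgz, Metric.mem_ball]
      have h1 : g w ∈ W := himg ⟨w, hw, rfl⟩
      have h2 := Metric.dist_le_diam_of_mem hWb h1 hvW
      linarith
    have h := Complex.norm_deriv_le_div_of_mapsTo_ball hgd (hmaps.mono_right Metric.ball_subset_closedBall) hδ
    exact h
  have hfinal : ∀ η > 0, δ ≤ ‖deriv F v‖ * D + ‖deriv F v‖ * η := by
    intro η hη
    have h1 := hkey η hη
    have h2 : ‖deriv F v‖ * ‖deriv g z‖ ≤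
        ‖deriv F v‖ * ((D + η) / δ) :=
      mul_le_mul_of_nonneg_left h1 (norm_nonneg _)
    rw [habs, ← mul_div_assoc] at h2
    have h3 : δ ≤ ‖deriv F v‖ * (D + η) := (one_le_div hδ).mp h2
    rw [mul_add] at h3
    exact h3
  by_contra hcon
  push_neg at hcon
  set A := ‖deriv F v‖ with hA
  have hgap : 0 < δ - D * A := by linarith
  have h4 := hfinal ((δ - D * A) / (2 * A)) (by positivity)
  have h5 : A * ((δ - D * A) / (2 * A)) = (δ - D * A) / 2 := by
    field_simp
  rw [h5] at h4
  nlinarith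

end Statement10Aux

/-- for a backward uniformly asymptotically stable polynomial map of degree at
least `2` and a non-exceptional `z ∈ J(f)`, for all sufficiently small `r > 0` and every
`ε > 0` there is `C > 0` such that for all `n` and all `v ∈ (f^[n])⁻¹{z}`,
`diam(W) · |(f^n)'(v)| ≥ C · exp(−n·ε)`, where `W` is the connected component of
`(f^[n])⁻¹(B(z,r))` containing `v`. -/
theorem diam_mul_deriv_ge (f : ℂ → ℂ) (hf : IsPolyEvalDeg2 f) (hbuas : BUAS f)
    (z : ℂ) (hzJ : z ∈ juliaSet f) (hz : NonExceptional f z) :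
    ∃ r₁ > 0, ∀ r : ℝ, 0 < r → r ≤ r₁ → ∀ ε > 0, ∃ C > 0, ∀ n : ℕ,
      ∀ v ∈ (f^[n]) ⁻¹' {z},
        C * Real.exp (-(n : ℝ) * ε) ≤
          Metric.diam (connectedComponentIn ((f^[n]) ⁻¹' (Metric.ball z r)) v) *
            ‖deriv (f^[n]) v‖ := by
  classical
  obtain ⟨p, hpdeg, hpev⟩ := hf
  have hdf : Differentiable ℂ f := by
    have h := p.differentiable
    have he : (fun x => p.eval x) = f := funext fun x => (hpev x).symm
    rwa [he] at h
  have hdfn : ∀ n : ℕ, Differentiable ℂ (f^[n]) := fun n => hdf.iterate n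
  -- iterates are polynomial maps
  have hiter : ∀ n : ℕ, ∃ q : Polynomial ℂ, 0 < q.degree ∧ ∀ x, f^[n] x = q.eval x := by
    intro n
    induction n with
    | zero =>
      refine ⟨Polynomial.X, ?_, fun x => by simp⟩
      rw [Polynomial.degree_X]
      norm_num
    | succ n ih =>
      obtain ⟨q, hq, hqe⟩ := ih
      refine ⟨q.comp p, ?_, fun x => ?_⟩
      · rw [← Polynomial.natDegree_pos_iff_degree_pos] at hq ⊢
        rw [Polynomial.natDegree_comp]
        exact Nat.mul_pos hq (by omega)
      · rw [Function.iterate_succ_apply, hqe (f x), hpev x, Polynomial.eval_comp]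
  -- bounded preimages of closed balls
  have hbddn : ∀ (n : ℕ) (s : ℝ),
      Bornology.IsBounded ((f^[n]) ⁻¹' Metric.closedBall z s) := by
    intro n s
    obtain ⟨q, hq, hqe⟩ := hiter n
    have ht : Filter.Tendsto (fun x : ℂ => ‖q.eval x‖) (Bornology.cobounded ℂ) Filter.atTop :=
      q.tendsto_norm_atTop hq tendsto_norm_cobounded_atTop
    have hev : ∀ᶠ x : ℂ in Bornology.cobounded ℂ, ‖z‖ + s < ‖q.eval x‖ :=
      ht.eventually_gt_atTop _
    have hb : Bornology.IsBounded ({x : ℂ | ‖z‖ + s < ‖q.eval x‖}ᶜ) := by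
      rw [Bornology.isBounded_def, compl_compl]
      exact hev
    refine hb.subset fun x hx => ?_
    simp only [Set.mem_compl_iff, Set.mem_setOf_eq, not_lt]
    have hx' : dist (f^[n] x) z ≤ s := hx
    calc ‖q.eval x‖ = ‖f^[n] x‖ := by rw [hqe]
      _ ≤ ‖f^[n] x - z‖ + ‖z‖ := by simpa using norm_add_le (f^[n] x - z) z
      _ ≤ s + ‖z‖ := by
          have hd : ‖f^[n] x - z‖ = dist (f^[n] x) z := (dist_eq_norm _ _).symm
          linarith
      _ = ‖z‖ + s := by ring
  -- derivative of iterates as a product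
  have hprod : ∀ (n : ℕ) (x : ℂ),
      HasDerivAt (f^[n]) (∏ i ∈ Finset.range n, deriv f (f^[i] x)) x := by
    intro n
    induction n with
    | zero => intro x; simpa using hasDerivAt_id x
    | succ n ih =>
      intro x
      have h1 : HasDerivAt f (deriv f (f^[n] x)) (f^[n] x) := (hdf _).hasDerivAt
      have h2 := h1.comp x (ih x)
      have h3 : f^[n + 1] = f ∘ f^[n] := Function.iterate_succ' f n
      rw [h3, Finset.prod_range_succ, mul_comm]
      exact h2
  have hderiveq : ∀ (n : ℕ) (x : ℂ),
      deriv (f^[n]) x = ∏ i ∈ Finset.range n, deriv f (f^[i] x) :=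
    fun n x => (hprod n x).deriv
  -- nonvanishing of the derivative on preimages of small balls
  have hcrit_gen : ∀ (e : ℝ), ∀ N : ℕ, (∀ n ≥ N, ∀ j, 1 ≤ j → j ≤ n →
      Metric.ball z (Real.exp (-(n : ℝ) * e)) ∩ (f^[j] '' critSet f) = ∅) →
      ∀ n ≥ N, ∀ x : ℂ, f^[n] x ∈ Metric.ball z (Real.exp (-(n : ℝ) * e)) →
        deriv (f^[n]) x ≠ 0 := by
    intro e N hN n hn x hx h0
    rw [hderiveq] at h0
    obtain ⟨i, hi, hzero⟩ := Finset.prod_eq_zero_iff.mp h0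
    rw [Finset.mem_range] at hi
    have himg : f^[n] x ∈ f^[n - i] '' critSet f := by
      refine ⟨f^[i] x, hzero, ?_⟩
      rw [← Function.iterate_add_apply, Nat.sub_add_cancel hi.le]
    have hemp := hN n hn (n - i) (Nat.sub_pos_of_lt hi) (Nat.sub_le n i)
    rw [Set.eq_empty_iff_forall_notMem] at hemp
    exact hemp _ ⟨hx, himg⟩
  -- nonvanishing of the derivative at any preimage of z
  have hderiv_ne : ∀ (n : ℕ) (x : ℂ), f^[n] x = z → deriv (f^[n]) x ≠ 0 := by
    intro n x hx h0
    obtain ⟨N, hN⟩ := hz 1 one_pos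
    rw [hderiveq] at h0
    obtain ⟨i, hi, hzero⟩ := Finset.prod_eq_zero_iff.mp h0
    rw [Finset.mem_range] at hi
    have himg : z ∈ f^[n - i] '' critSet f := by
      refine ⟨f^[i] x, hzero, ?_⟩
      rw [← Function.iterate_add_apply, Nat.sub_add_cancel hi.le, hx]
    set n' : ℕ := max n N with hn'def
    have hmem : z ∈ Metric.ball z (Real.exp (-(n' : ℝ) * 1)) :=
      Metric.mem_ball_self (Real.exp_pos _)
    have hemp := hN n' (le_max_right _ _) (n - i) (Nat.sub_pos_of_lt hi)
      ((Nat.sub_le n i).trans (le_max_left _ _))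
    rw [Set.eq_empty_iff_forall_notMem] at hemp
    exact hemp z ⟨hmem, himg⟩
  -- conclusion
  refine ⟨1, one_pos, fun r hr _ ε hε => ?_⟩
  obtain ⟨N₀, hN₀⟩ := hz ε hε
  have htend : Filter.Tendsto (fun n : ℕ => Real.exp (-(n : ℝ) * ε)) Filter.atTop (nhds 0) := by
    have heq : ∀ n : ℕ, Real.exp (-(n : ℝ) * ε) = Real.exp (-ε) ^ n := by
      intro n
      rw [show -(n : ℝ) * ε = (n : ℝ) * (-ε) by ring, Real.exp_nat_mul]
    refine Filter.Tendsto.congr (fun n => (heq n).symm) ?_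
    exact tendsto_pow_atTop_nhds_zero_of_lt_one (Real.exp_pos _).le
      (Real.exp_lt_one_iff.mpr (neg_lt_zero.mpr hε))
  obtain ⟨N₁, hN₁⟩ := Filter.eventually_atTop.mp (htend.eventually (gt_mem_nhds hr))
  set N' := max N₀ N₁ with hN'def
  -- the bound for large n
  have hgood : ∀ n, N' ≤ n → ∀ v : ℂ, f^[n] v = z →
      (1 / 2) * Real.exp (-(n : ℝ) * ε) ≤
        Metric.diam (connectedComponentIn ((f^[n]) ⁻¹' Metric.ball z r) v) *
          ‖deriv (f^[n]) v‖ := by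
    intro n hn v hv
    set e := Real.exp (-(n : ℝ) * ε) with he
    have hepos : 0 < e := Real.exp_pos _
    have her : e < r := hN₁ n (le_trans (le_max_right _ _) hn)
    have hcrit : ∀ x : ℂ, f^[n] x ∈ Metric.closedBall z (e / 2) → deriv (f^[n]) x ≠ 0 := by
      intro x hx
      apply hcrit_gen ε N₀ hN₀ n (le_trans (le_max_left _ _) hn) x
      rw [Metric.mem_ball]
      have := Metric.mem_closedBall.mp hx
      rw [← he]
      linarith
    have hkb := Statement10Aux.key_bound (f^[n]) (hdfn n) z v (e / 2) r
      (by positivity) (by linarith) hv (hbddn n r) hcrit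
    calc (1 / 2) * e = e / 2 := by ring
      _ ≤ _ := hkb
  -- uniform constant for small n
  have hsmall : ∀ Mx : ℕ, ∃ C > 0, ∀ n, n < Mx → ∀ v : ℂ, f^[n] v = z →
      C * Real.exp (-(n : ℝ) * ε) ≤
        Metric.diam (connectedComponentIn ((f^[n]) ⁻¹' Metric.ball z r) v) *
          ‖deriv (f^[n]) v‖ := by
    intro Mx
    induction Mx with
    | zero => exact ⟨1, one_pos, fun n hn => absurd hn (Nat.not_lt_zero n)⟩
    | succ M ih =>
      obtain ⟨C, hC, hCle⟩ := ih
      obtain ⟨q, hq, hqe⟩ := hiter M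
      have hqz : q - Polynomial.C z ≠ 0 := by
        intro h
        have h1 : q = Polynomial.C z := by rwa [sub_eq_zero] at h
        rw [h1] at hq
        exact absurd (lt_of_lt_of_le hq Polynomial.degree_C_le) (lt_irrefl _)
      have hfib : Set.Finite {x : ℂ | f^[M] x = z} := by
        have hset : {x : ℂ | f^[M] x = z} = {x | (q - Polynomial.C z).IsRoot x} := by
          ext x
          simp [Polynomial.IsRoot, hqe x, sub_eq_zero]
        rw [hset]
        exact Polynomial.finite_setOf_isRoot hqz
      set h : ℂ → ℝ := fun v =>
        Metric.diam (connectedComponentIn ((f^[M]) ⁻¹' Metric.ball z r) v) *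
          ‖deriv (f^[M]) v‖ with hh
      have hpos : ∀ v : ℂ, f^[M] v = z → 0 < h v := by
        intro v hv
        have habs : 0 < ‖deriv (f^[M]) v‖ := norm_pos_iff.mpr (hderiv_ne M v hv)
        have hWo : IsOpen (connectedComponentIn ((f^[M]) ⁻¹' Metric.ball z r) v) :=
          (Metric.isOpen_ball.preimage (hdfn M).continuous).connectedComponentIn
        have hvmem : v ∈ connectedComponentIn ((f^[M]) ⁻¹' Metric.ball z r) v := by
          apply mem_connectedComponentIn
          simp only [Set.mem_preimage, hv]
          exact Metric.mem_ball_self hr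
        obtain ⟨ρ, hρ, hball⟩ := Metric.isOpen_iff.mp hWo v hvmem
        have hdvu : dist (v + ((ρ / 2 : ℝ) : ℂ)) v = ρ / 2 := by
          rw [dist_eq_norm, add_sub_cancel_left, Complex.norm_real, Real.norm_eq_abs, abs_of_nonneg (by linarith)]
        have humem : v + ((ρ / 2 : ℝ) : ℂ) ∈ connectedComponentIn ((f^[M]) ⁻¹' Metric.ball z r) v := by
          apply hball
          rw [Metric.mem_ball, hdvu]
          linarith
        have hWb : Bornology.IsBounded (connectedComponentIn ((f^[M]) ⁻¹' Metric.ball z r) v) :=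
          (hbddn M r).subset ((connectedComponentIn_subset _ _).trans
            (Set.preimage_mono Metric.ball_subset_closedBall))
        have hdist := Metric.dist_le_diam_of_mem hWb humem hvmem
        rw [hdvu] at hdist
        exact mul_pos (by linarith) habs
      set T := hfib.toFinset with hTdef
      by_cases hTne : T.Nonempty
      · set CM := T.inf' hTne h with hCMdef
        have hCMpos : 0 < CM := by
          rw [hCMdef, Finset.lt_inf'_iff]
          intro i hi
          exact hpos i (by simpa [hTdef, Set.Finite.mem_toFinset] using hi)
        refine ⟨min C CM, lt_min hC hCMpos, ?_⟩
        intro n hn v hv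
        rcases Nat.lt_succ_iff_lt_or_eq.mp hn with hlt | heq
        · calc min C CM * Real.exp (-(n : ℝ) * ε) ≤ C * Real.exp (-(n : ℝ) * ε) :=
              mul_le_mul_of_nonneg_right (min_le_left _ _) (Real.exp_pos _).le
            _ ≤ _ := hCle n hlt v hv
        · subst heq
          have hvT : v ∈ T := by
            rw [hTdef, Set.Finite.mem_toFinset]
            exact hv
          have hexp1 : Real.exp (-(n : ℝ) * ε) ≤ 1 := by
            apply Real.exp_le_one_iff.mpr
            have h1 : 0 ≤ (n : ℝ) * ε := mul_nonneg (Nat.cast_nonneg n) hε.le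
            linarith
          calc min C CM * Real.exp (-(n : ℝ) * ε) ≤ CM * 1 :=
              mul_le_mul (min_le_right _ _) hexp1 (Real.exp_pos _).le hCMpos.le
            _ = CM := mul_one _
            _ ≤ h v := Finset.inf'_le _ hvT
      · refine ⟨C, hC, ?_⟩
        intro n hn v hv
        rcases Nat.lt_succ_iff_lt_or_eq.mp hn with hlt | heq
        · exact hCle n hlt v hv
        · subst heq
          exact absurd ⟨v, by rw [hTdef, Set.Finite.mem_toFinset]; exact hv⟩ hTne
  obtain ⟨C₀, hC₀, hC₀le⟩ := hsmall N'
  refine ⟨min C₀ (1 / 2), lt_min hC₀ (by norm_num), ?_⟩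
  intro n v hv
  have hvz : f^[n] v = z := hv
  by_cases hn : N' ≤ n
  · calc min C₀ (1 / 2) * Real.exp (-(n : ℝ) * ε)
        ≤ (1 / 2) * Real.exp (-(n : ℝ) * ε) :=
          mul_le_mul_of_nonneg_right (min_le_right _ _) (Real.exp_pos _).le
      _ ≤ _ := hgood n hn v hvz
  · push_neg at hn
    calc min C₀ (1 / 2) * Real.exp (-(n : ℝ) * ε)
        ≤ C₀ * Real.exp (-(n : ℝ) * ε) :=
          mul_le_mul_of_nonneg_right (min_le_left _ _) (Real.exp_pos _).le
      _ ≤ _ := hC₀le n hn v hvz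

end
end

section
/- Let m ≥ 1 and let A be an m × m real matrix with nonnegative entries which is primitive, i.e. there exists N ≥ 1 such that every entry of A^N is strictly positive. Then there exists λ > 0 such that for every pair of indices (i,j), ((A^k)_{ij})^{1/k} → λ as k → ∞, and moreover ‖A^k‖^{1/k} → λ as k → ∞; in particular the limit lim_k ((A^k)_{ij})^{1/k} exists and is independent of the position (i,j), and equals the spectral radius of A. -/
open Filter

noncomputable section

attribute [local instance] Matrix.linftyOpNormedRing
attribute [local instance] Matrix.linftyOpNormedAlgebra

private lemma aux_nnnorm_entry_le {m : ℕ} {α : Type*} [NormedRing α]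
    (B : Matrix (Fin m) (Fin m) α) (i j : Fin m) : ‖B i j‖₊ ≤ ‖B‖₊ := by
  rw [Matrix.linfty_opNNNorm_def]
  exact le_trans (Finset.single_le_sum (f := fun j' => ‖B i j'‖₊)
    (fun _ _ => zero_le) (Finset.mem_univ j))
    (Finset.le_sup (f := fun i => ∑ j, ‖B i j‖₊) (Finset.mem_univ i))

private lemma aux_entry_le_norm {m : ℕ} (B : Matrix (Fin m) (Fin m) ℝ) (i j : Fin m) :
    B i j ≤ ‖B‖ := by
  calc B i j ≤ |B i j| := le_abs_self _
  _ = ‖B i j‖ := (Real.norm_eq_abs _).symm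
  _ ≤ ‖B‖ := by
      have := aux_nnnorm_entry_le B i j
      exact_mod_cast NNReal.coe_le_coe.mpr this

private lemma aux_row_sum_le_norm {m : ℕ} (B : Matrix (Fin m) (Fin m) ℝ)
    (h0 : ∀ i j, 0 ≤ B i j) (i : Fin m) : ∑ j, B i j ≤ ‖B‖ := by
  have h1 : ∑ j, B i j = ((∑ j, ‖B i j‖₊ : NNReal) : ℝ) := by
    push_cast
    exact Finset.sum_congr rfl fun j _ => (Real.norm_of_nonneg (h0 i j)).symm
  rw [h1, Matrix.linfty_opNorm_def]
  exact_mod_cast NNReal.coe_le_coe.mpr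
    (Finset.le_sup (f := fun i => ∑ j, ‖B i j‖₊) (Finset.mem_univ i))

private lemma aux_norm_le_total {m : ℕ} (B : Matrix (Fin m) (Fin m) ℝ)
    (h0 : ∀ i j, 0 ≤ B i j) : ‖B‖ ≤ ∑ i, ∑ j, B i j := by
  have hC : (0:ℝ) ≤ ∑ i, ∑ j, B i j :=
    Finset.sum_nonneg fun i _ => Finset.sum_nonneg fun j _ => h0 i j
  have key : ∀ i : Fin m, ((∑ j, ‖B i j‖₊ : NNReal) : ℝ) ≤ ∑ i, ∑ j, B i j := by
    intro i
    have h1 : ((∑ j, ‖B i j‖₊ : NNReal) : ℝ) = ∑ j, B i j := by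
      push_cast
      exact Finset.sum_congr rfl fun j _ => Real.norm_of_nonneg (h0 i j)
    rw [h1]
    exact Finset.single_le_sum (f := fun i => ∑ j, B i j)
      (fun i _ => Finset.sum_nonneg fun j _ => h0 i j) (Finset.mem_univ i)
  rw [Matrix.linfty_opNorm_def]
  have h2 : (Finset.univ.sup fun i : Fin m => ∑ j, ‖B i j‖₊) ≤
      (∑ i, ∑ j, B i j : ℝ).toNNReal := by
    refine Finset.sup_le fun i _ => ?_
    rw [← NNReal.coe_le_coe, Real.coe_toNNReal _ hC]
    exact key i
  calc ((Finset.univ.sup fun i : Fin m => ∑ j, ‖B i j‖₊ : NNReal) : ℝ)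
      ≤ ((∑ i, ∑ j, B i j : ℝ).toNNReal : ℝ) := NNReal.coe_le_coe.mpr h2
  _ = ∑ i, ∑ j, B i j := Real.coe_toNNReal _ hC

/-- for a primitive nonnegative `m × m` real matrix `A` there is `λ > 0` such
that `((A^k)_{ij})^{1/k} → λ` for every position `(i,j)`, and `‖A^k‖^{1/k} → λ` (here for the
`ℓ∞` operator norm); this common limit is the spectral radius of `A`. -/
theorem primitive_matrix_growth_rate (m : ℕ) (hm : 1 ≤ m)
    (A : Matrix (Fin m) (Fin m) ℝ) (hnn : ∀ i j, 0 ≤ A i j)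
    (hprim : ∃ N : ℕ, 1 ≤ N ∧ ∀ i j, 0 < (A ^ N) i j) :
    ∃ lam : ℝ, 0 < lam ∧
      (∀ i j, Filter.Tendsto (fun k : ℕ => ((A ^ k) i j) ^ (1 / (k : ℝ)))
        Filter.atTop (nhds lam)) ∧
      Filter.Tendsto (fun k : ℕ => ‖A ^ k‖ ^ (1 / (k : ℝ))) Filter.atTop (nhds lam) ∧
      ENNReal.ofReal lam = spectralRadius ℝ A := by
  classical
  obtain ⟨N, hN1, hNpos⟩ := hprim
  have i0 : Fin m := ⟨0, hm⟩
  haveI : Nonempty (Fin m) := ⟨i0⟩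
  -- nonnegativity of entries of powers
  have hpnn : ∀ k, ∀ i j : Fin m, 0 ≤ (A ^ k) i j := by
    intro k
    induction k with
    | zero =>
      intro i j
      rw [pow_zero]
      by_cases h : i = j <;> simp [Matrix.one_apply, h]
    | succ k ih =>
      intro i j
      rw [pow_succ, Matrix.mul_apply]
      exact Finset.sum_nonneg fun t _ => mul_nonneg (ih i t) (hnn t j)
  -- positivity of A^(N*k)
  have hNk : ∀ k, 1 ≤ k → ∀ i j : Fin m, 0 < (A ^ (N * k)) i j := by
    intro k hk
    induction k, hk using Nat.le_induction with
    | base => simpa [mul_one] using hNpos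
    | succ k hk ih =>
      intro i j
      have hsplit : A ^ (N * (k + 1)) = A ^ (N * k) * A ^ N := by
        rw [← pow_add]; ring_nf
      rw [hsplit, Matrix.mul_apply]
      exact Finset.sum_pos (fun t _ => mul_pos (ih i t) (hNpos t j)) Finset.univ_nonempty
  -- powers are non-zero
  have hne : ∀ k, (A ^ k) ≠ 0 := by
    intro k hk0
    have h1 : 0 < (A ^ (N * (k + 1))) i0 i0 := hNk (k + 1) (by omega) i0 i0
    have hge : k ≤ N * (k + 1) := by nlinarith
    have h2 : A ^ (N * (k + 1)) = A ^ k * A ^ (N * (k + 1) - k) := by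
      rw [← pow_add]; congr 1; omega
    rw [h2, hk0, zero_mul] at h1
    simp at h1
  have hnormpos : ∀ k, 0 < ‖A ^ k‖ := fun k => norm_pos_iff.mpr (hne k)
  -- minimal entry δ of A^N
  obtain ⟨p, -, hp⟩ := Finset.exists_min_image Finset.univ
    (fun p : Fin m × Fin m => (A ^ N) p.1 p.2) Finset.univ_nonempty
  set δ : ℝ := (A ^ N) p.1 p.2 with hδdef
  have hδpos : 0 < δ := hNpos _ _
  have hδle : ∀ i j, δ ≤ (A ^ N) i j := fun i j => hp (i, j) (Finset.mem_univ _)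
  -- minimal row sum of A
  obtain ⟨it, -, hit⟩ := Finset.exists_min_image Finset.univ
    (fun i : Fin m => ∑ j, A i j) Finset.univ_nonempty
  set t : ℝ := ∑ j, A it j with htdef
  have hit' : ∀ i, t ≤ ∑ j, A i j := fun i => hit i (Finset.mem_univ _)
  have htpos : 0 < t := by
    rcases lt_or_ge 0 t with h | h
    · exact h
    · exfalso
      have ht0 : t = 0 :=
        le_antisymm h (Finset.sum_nonneg fun j _ => hnn it j)
      have hrow0 : ∀ j, A it j = 0 := by
        intro j
        have := (Finset.sum_eq_zero_iff_of_nonneg (fun j _ => hnn it j)).mp ht0.symm.symm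
        exact this j (Finset.mem_univ j) |>.symm ▸ rfl
      have hsplit : A ^ N = A * A ^ (N - 1) := by
        conv_lhs => rw [show N = 1 + (N - 1) by omega]
        rw [pow_add, pow_one]
      have : (A ^ N) it it = 0 := by
        rw [hsplit, Matrix.mul_apply]
        exact Finset.sum_eq_zero fun s _ => by rw [hrow0 s, zero_mul]
      exact (hNpos it it).ne' this
  -- row sums of powers are at least t^k
  have hrow : ∀ k, ∀ i : Fin m, t ^ k ≤ ∑ j, (A ^ k) i j := by
    intro k
    induction k with
    | zero =>
      intro i
      simp [Matrix.one_apply]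
    | succ k ih =>
      intro i
      have h1 : ∑ j, (A ^ (k + 1)) i j = ∑ s, A i s * ∑ j, (A ^ k) s j := by
        rw [pow_succ']
        simp_rw [Matrix.mul_apply, Finset.mul_sum]
        rw [Finset.sum_comm]
      rw [h1]
      calc t ^ (k + 1) = t * t ^ k := by ring
      _ ≤ (∑ s, A i s) * t ^ k :=
          mul_le_mul_of_nonneg_right (hit' i) (pow_nonneg htpos.le k)
      _ = ∑ s, A i s * t ^ k := by rw [Finset.sum_mul]
      _ ≤ ∑ s, A i s * ∑ j, (A ^ k) s j :=
          Finset.sum_le_sum fun s _ => mul_le_mul_of_nonneg_left (ih s) (hnn i s)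
  have hnormge : ∀ k, t ^ k ≤ ‖A ^ k‖ := fun k =>
    le_trans (hrow k i0) (aux_row_sum_le_norm _ (hpnn k) i0)
  -- Fekete
  set u : ℕ → ℝ := fun k => Real.log ‖A ^ k‖ with hudef
  have hsub : Subadditive u := by
    intro a b
    have h := Matrix.linfty_opNorm_mul (A ^ a) (A ^ b)
    rw [← pow_add] at h
    calc u (a + b) ≤ Real.log (‖A ^ a‖ * ‖A ^ b‖) :=
        Real.log_le_log (hnormpos _) h
    _ = u a + u b := Real.log_mul (hnormpos a).ne' (hnormpos b).ne'
  have hbdd : BddBelow (Set.range fun n : ℕ => u n / n) := by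
    refine ⟨min (Real.log t) 0, ?_⟩
    rintro x ⟨n, rfl⟩
    rcases Nat.eq_zero_or_pos n with hn | hn
    · subst hn
      simp only [Nat.cast_zero, div_zero]
      exact min_le_right _ _
    · refine le_trans (min_le_left _ _) ?_
      rw [le_div_iff₀ (by exact_mod_cast hn : (0:ℝ) < n)]
      calc Real.log t * n = Real.log (t ^ n) := by
            rw [Real.log_pow]; ring
      _ ≤ u n := Real.log_le_log (pow_pos htpos n) (hnormge n)
  set L : ℝ := hsub.lim with hLdef
  have hlim : Tendsto (fun n : ℕ => u n / n) atTop (nhds L) := hsub.tendsto_lim hbdd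
  set lam : ℝ := Real.exp L with hlamdef
  have hlpos : 0 < lam := Real.exp_pos L
  -- norm limit
  have hexp : Tendsto (fun n : ℕ => Real.exp (u n / n)) atTop (nhds lam) :=
    (Real.continuous_exp.tendsto L).comp hlim
  have hnormlim : Tendsto (fun k : ℕ => ‖A ^ k‖ ^ (1 / (k : ℝ))) atTop (nhds lam) := by
    refine hexp.congr fun k => ?_
    rw [Real.rpow_def_of_pos (hnormpos k), mul_one_div]
  -- sandwich inequality
  have hsand : ∀ k, ∀ i j : Fin m, δ ^ 2 * ‖A ^ k‖ ≤ (A ^ (k + 2 * N)) i j := by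
    intro k i j
    have hexp2 : A ^ (k + 2 * N) = A ^ N * A ^ k * A ^ N := by
      rw [← pow_add, ← pow_add]; ring_nf
    rw [hexp2]
    have h2 : (A ^ N * A ^ k * A ^ N) i j
        = ∑ s2, (∑ s1, (A ^ N) i s1 * (A ^ k) s1 s2) * (A ^ N) s2 j := by
      rw [Matrix.mul_apply]
      exact Finset.sum_congr rfl fun s2 _ => by rw [Matrix.mul_apply]
    rw [h2]
    calc δ ^ 2 * ‖A ^ k‖ ≤ δ ^ 2 * ∑ s1, ∑ s2, (A ^ k) s1 s2 :=
        mul_le_mul_of_nonneg_left (aux_norm_le_total _ (hpnn k)) (sq_nonneg δ)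
    _ = ∑ s2, (∑ s1, δ * (A ^ k) s1 s2) * δ := by
        simp only [Finset.sum_mul, Finset.mul_sum]
        rw [Finset.sum_comm]
        exact Finset.sum_congr rfl fun s2 _ =>
          Finset.sum_congr rfl fun s1 _ => by ring
    _ ≤ ∑ s2, (∑ s1, (A ^ N) i s1 * (A ^ k) s1 s2) * (A ^ N) s2 j := by
        refine Finset.sum_le_sum fun s2 _ => ?_
        have hinner : ∑ s1, δ * (A ^ k) s1 s2 ≤ ∑ s1, (A ^ N) i s1 * (A ^ k) s1 s2 :=
          Finset.sum_le_sum fun s1 _ =>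
            mul_le_mul_of_nonneg_right (hδle i s1) (hpnn k s1 s2)
        have hinnernn : 0 ≤ ∑ s1, δ * (A ^ k) s1 s2 :=
          Finset.sum_nonneg fun s1 _ => mul_nonneg hδpos.le (hpnn k s1 s2)
        exact mul_le_mul hinner (hδle s2 j) hδpos.le
          (le_trans hinnernn hinner)
  have hlowk : ∀ k, 2 * N ≤ k → ∀ i j : Fin m,
      δ ^ 2 * ‖A ^ (k - 2 * N)‖ ≤ (A ^ k) i j := by
    intro k hk i j
    have := hsand (k - 2 * N) i j
    rwa [Nat.sub_add_cancel hk] at this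
  have hentrypos : ∀ k, 2 * N ≤ k → ∀ i j : Fin m, 0 < (A ^ k) i j := by
    intro k hk i j
    exact lt_of_lt_of_le (mul_pos (by positivity) (hnormpos _)) (hlowk k hk i j)
  -- the shifted limit
  have hshift : Tendsto (fun k : ℕ => u (k - 2 * N) / k) atTop (nhds L) := by
    have hq : Tendsto (fun x : ℝ => x / (x + 2 * N)) atTop (nhds 1) := by
      have h0 : Tendsto (fun x : ℝ => (2 * N : ℝ) / (x + 2 * N)) atTop (nhds 0) :=
        Tendsto.div_atTop tendsto_const_nhds
          (tendsto_atTop_add_const_right atTop _ tendsto_id)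
      have h1 : Tendsto (fun x : ℝ => 1 - (2 * N : ℝ) / (x + 2 * N)) atTop (nhds 1) := by
        simpa using tendsto_const_nhds.sub h0
      refine h1.congr' ?_
      filter_upwards [eventually_gt_atTop (0:ℝ)] with x hx
      have hxne : x + 2 * N ≠ 0 := by positivity
      field_simp; ring
    have hq' : Tendsto (fun k : ℕ => (k : ℝ) / ((k : ℝ) + 2 * N)) atTop (nhds 1) :=
      hq.comp tendsto_natCast_atTop_atTop
    have h1 : Tendsto (fun k : ℕ => u k / ((k : ℝ) + 2 * N)) atTop (nhds L) := by
      have h2 := hlim.mul hq'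
      rw [mul_one] at h2
      refine h2.congr' ?_
      filter_upwards [eventually_ge_atTop 1] with k hk
      have hkne : (k : ℝ) ≠ 0 := by
        exact_mod_cast Nat.one_le_iff_ne_zero.mp hk
      field_simp
    have h3 := h1.comp (tendsto_sub_atTop_nat (2 * N))
    refine h3.congr' ?_
    filter_upwards [eventually_ge_atTop (2 * N)] with k hk
    have : ((k - 2 * N : ℕ) : ℝ) + 2 * N = (k : ℝ) := by
      rw [Nat.cast_sub hk]; push_cast; ring
    simp only [Function.comp_apply, this]
  -- entrywise limits
  have hentry : ∀ i j : Fin m,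
      Tendsto (fun k : ℕ => ((A ^ k) i j) ^ (1 / (k : ℝ))) atTop (nhds lam) := by
    intro i j
    have hlog : Tendsto (fun k : ℕ => Real.log ((A ^ k) i j) / k) atTop (nhds L) := by
      have hg1 : Tendsto (fun k : ℕ => (Real.log (δ ^ 2) + u (k - 2 * N)) / k)
          atTop (nhds L) := by
        have ha := tendsto_const_div_atTop_nhds_zero_nat (Real.log (δ ^ 2))
        have := ha.add hshift
        rw [zero_add] at this
        refine this.congr fun k => ?_
        rw [add_div]
      refine tendsto_of_tendsto_of_tendsto_of_le_of_le' hg1 hlim ?_ ?_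
      · filter_upwards [eventually_ge_atTop (2 * N + 1)] with k hk
        have hk2 : 2 * N ≤ k := by omega
        have hkpos : (0:ℝ) ≤ (k : ℝ) := Nat.cast_nonneg k
        have hnum : Real.log (δ ^ 2) + u (k - 2 * N) ≤ Real.log ((A ^ k) i j) := by
          have heq : Real.log (δ ^ 2) + u (k - 2 * N)
              = Real.log (δ ^ 2 * ‖A ^ (k - 2 * N)‖) :=
            (Real.log_mul (pow_ne_zero 2 hδpos.ne') (hnormpos _).ne').symm
          rw [heq]
          exact Real.log_le_log (mul_pos (pow_pos hδpos 2) (hnormpos _)) (hlowk k hk2 i j)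
        gcongr
      · filter_upwards [eventually_ge_atTop (2 * N + 1)] with k hk
        have hk2 : 2 * N ≤ k := by omega
        have hnum : Real.log ((A ^ k) i j) ≤ u k :=
          Real.log_le_log (hentrypos k hk2 i j) (aux_entry_le_norm _ i j)
        gcongr
    have hexp2 : Tendsto (fun k : ℕ => Real.exp (Real.log ((A ^ k) i j) / k))
        atTop (nhds lam) := (Real.continuous_exp.tendsto L).comp hlog
    refine hexp2.congr' ?_
    filter_upwards [eventually_ge_atTop (2 * N + 1)] with k hk
    have hk2 : 2 * N ≤ k := by omega
    rw [Real.rpow_def_of_pos (hentrypos k hk2 i j), mul_one_div]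
  -- growth lemma
  have hgrow : ∀ (s : ℝ) (w : Fin m → ℝ), 0 ≤ s → (∀ i, 0 < w i) →
      (∀ i, s * w i ≤ A.mulVec w i) → s ≤ lam := by
    intro s w hs hw hle
    have hkey : ∀ k, ∀ i, s ^ k * w i ≤ (A ^ k).mulVec w i := by
      intro k
      induction k with
      | zero =>
        intro i
        simp [Matrix.one_mulVec]
      | succ k ih =>
        intro i
        have h1 : (A ^ (k + 1)).mulVec w = A.mulVec ((A ^ k).mulVec w) := by
          rw [Matrix.mulVec_mulVec, ← pow_succ']
        rw [h1]
        have h2 : A.mulVec ((A ^ k).mulVec w) i = ∑ j, A i j * ((A ^ k).mulVec w) j := rfl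
        have h3 : A.mulVec w i = ∑ j, A i j * w j := rfl
        calc s ^ (k + 1) * w i = s ^ k * (s * w i) := by ring
        _ ≤ s ^ k * A.mulVec w i :=
            mul_le_mul_of_nonneg_left (hle i) (pow_nonneg hs k)
        _ = ∑ j, A i j * (s ^ k * w j) := by
            rw [h3, Finset.mul_sum]
            exact Finset.sum_congr rfl fun j _ => by ring
        _ ≤ ∑ j, A i j * ((A ^ k).mulVec w) j :=
            Finset.sum_le_sum fun j _ => mul_le_mul_of_nonneg_left (ih j) (hnn i j)
        _ = A.mulVec ((A ^ k).mulVec w) i := h2.symm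
    have hwipos := hw i0
    have hsk : ∀ k, s ^ k ≤ (‖w‖ / w i0) * ‖A ^ k‖ := by
      intro k
      rw [div_mul_eq_mul_div, le_div_iff₀ hwipos]
      calc s ^ k * w i0 ≤ (A ^ k).mulVec w i0 := hkey k i0
      _ ≤ |(A ^ k).mulVec w i0| := le_abs_self _
      _ = ‖(A ^ k).mulVec w i0‖ := (Real.norm_eq_abs _).symm
      _ ≤ ‖(A ^ k).mulVec w‖ := norm_le_pi_norm _ i0
      _ ≤ ‖A ^ k‖ * ‖w‖ := Matrix.linfty_opNorm_mulVec _ _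
      _ = ‖w‖ * ‖A ^ k‖ := mul_comm _ _
    set C : ℝ := ‖w‖ / w i0 with hCdef
    have hCpos : 0 < C := by
      apply div_pos _ hwipos
      calc (0:ℝ) < w i0 := hwipos
      _ ≤ |w i0| := le_abs_self _
      _ = ‖w i0‖ := (Real.norm_eq_abs _).symm
      _ ≤ ‖w‖ := norm_le_pi_norm _ i0
    have hCl : Tendsto (fun k : ℕ => C ^ (1 / (k : ℝ))) atTop (nhds 1) := by
      have h0 := tendsto_const_div_atTop_nhds_zero_nat (Real.log C)
      have h1 : Tendsto (fun k : ℕ => Real.exp (Real.log C / k)) atTop (nhds 1) := by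
        have := (Real.continuous_exp.tendsto 0).comp h0
        rwa [Real.exp_zero] at this
      refine h1.congr fun k => ?_
      rw [Real.rpow_def_of_pos hCpos, mul_one_div]
    have hprod : Tendsto (fun k : ℕ => C ^ (1 / (k : ℝ)) * ‖A ^ k‖ ^ (1 / (k : ℝ)))
        atTop (nhds lam) := by
      have := hCl.mul hnormlim
      rwa [one_mul] at this
    refine ge_of_tendsto hprod ?_
    filter_upwards [eventually_ge_atTop 1] with k hk
    have hkne : (k : ℝ) ≠ 0 := by
      exact_mod_cast Nat.one_le_iff_ne_zero.mp hk
    have h4 : s = (s ^ k) ^ (1 / (k : ℝ)) := by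
      rw [← Real.rpow_natCast s k, ← Real.rpow_mul hs, mul_one_div,
        div_self hkne, Real.rpow_one]
    rw [h4, ← Real.mul_rpow hCpos.le (norm_nonneg _)]
    exact Real.rpow_le_rpow (pow_nonneg hs k) (hsk k) (by positivity)
  -- spectral radius via complexification
  haveI : CompleteSpace (Matrix (Fin m) (Fin m) ℂ) := FiniteDimensional.complete ℂ _
  haveI : Nontrivial (Matrix (Fin m) (Fin m) ℂ) := by
    refine ⟨0, 1, fun h => ?_⟩
    have := congr_fun (congr_fun h i0) i0
    simp [Matrix.one_apply] at this
  set Ac : Matrix (Fin m) (Fin m) ℂ := (Complex.ofRealHom.mapMatrix A) with hAcdef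
  have hAck : ∀ k, Ac ^ k = Complex.ofRealHom.mapMatrix (A ^ k) := fun k =>
    (map_pow (Complex.ofRealHom.mapMatrix) A k).symm
  have hnormc : ∀ k, ‖Ac ^ k‖₊ = ‖A ^ k‖₊ := by
    intro k
    rw [hAck, Matrix.linfty_opNNNorm_def, Matrix.linfty_opNNNorm_def]
    congr 1
    funext i
    refine Finset.sum_congr rfl fun j _ => ?_
    simp [Matrix.map_apply, Complex.nnnorm_real]
  have hGel : Tendsto (fun k : ℕ => ((‖Ac ^ k‖₊ : NNReal) : ENNReal) ^ (1 / (k : ℝ)))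
      atTop (nhds (spectralRadius ℂ Ac)) :=
    spectrum.pow_nnnorm_pow_one_div_tendsto_nhds_spectralRadius Ac
  have hconv : Tendsto (fun k : ℕ => ((‖Ac ^ k‖₊ : NNReal) : ENNReal) ^ (1 / (k : ℝ)))
      atTop (nhds (ENNReal.ofReal lam)) := by
    have h0 : Tendsto (fun k : ℕ => ENNReal.ofReal (‖A ^ k‖ ^ (1 / (k : ℝ))))
        atTop (nhds (ENNReal.ofReal lam)) :=
      (ENNReal.continuous_ofReal.tendsto lam).comp hnormlim
    refine h0.congr fun k => ?_
    rw [← ENNReal.ofReal_rpow_of_nonneg (norm_nonneg _)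
      (by positivity : (0:ℝ) ≤ 1 / (k:ℝ)), ofReal_norm, enorm_eq_nnnorm, hnormc k]
  have hsr : spectralRadius ℂ Ac = ENNReal.ofReal lam := tendsto_nhds_unique hGel hconv
  obtain ⟨z, hzmem, hznorm⟩ := spectrum.exists_nnnorm_eq_spectralRadius Ac
  have habs : ‖z‖ = lam := by
    rw [hsr] at hznorm
    have h1 : (‖z‖₊ : ENNReal) = ((lam.toNNReal : NNReal) : ENNReal) := by
      rw [hznorm, ENNReal.ofReal]
    have h2 : ‖z‖₊ = lam.toNNReal := ENNReal.coe_injective h1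
    calc ‖z‖ = ((‖z‖₊ : NNReal) : ℝ) := rfl
    _ = ((lam.toNNReal : NNReal) : ℝ) := by rw [h2]
    _ = lam := Real.coe_toNNReal _ hlpos.le
  -- eigenvector for z
  have hdetz : (algebraMap ℂ (Matrix (Fin m) (Fin m) ℂ) z - Ac).det = 0 := by
    by_contra h
    exact (spectrum.mem_iff.mp hzmem)
      ((Matrix.isUnit_iff_isUnit_det _).mpr (isUnit_iff_ne_zero.mpr h))
  obtain ⟨v, hv0, hveq⟩ := Matrix.exists_mulVec_eq_zero_iff.mpr hdetz
  have hAv : Ac.mulVec v = z • v := by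
    rw [Matrix.sub_mulVec] at hveq
    have h2 : (algebraMap ℂ (Matrix (Fin m) (Fin m) ℂ) z).mulVec v = z • v := by
      rw [Algebra.algebraMap_eq_smul_one, Matrix.smul_mulVec, Matrix.one_mulVec]
    rw [h2] at hveq
    exact (sub_eq_zero.mp hveq).symm
  set uv : Fin m → ℝ := fun i => ‖v i‖ with huvdef
  obtain ⟨iw, hiw⟩ : ∃ i, v i ≠ 0 := Function.ne_iff.mp hv0
  have huvpos : 0 < uv iw := norm_pos_iff.mpr hiw
  have huvnn : ∀ i, 0 ≤ uv i := fun i => norm_nonneg _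
  have htri : ∀ i, lam * uv i ≤ A.mulVec uv i := by
    intro i
    have h1 : (Ac.mulVec v) i = z * v i := by rw [hAv]; rfl
    have h2 : (Ac.mulVec v) i = ∑ j, Ac i j * v j := rfl
    have h3 : A.mulVec uv i = ∑ j, A i j * uv j := rfl
    calc lam * uv i = ‖z * v i‖ := by rw [norm_mul, habs]
    _ = ‖∑ j, Ac i j * v j‖ := by rw [← h2, h1]
    _ ≤ ∑ j, ‖Ac i j * v j‖ := norm_sum_le _ _
    _ = ∑ j, A i j * uv j := by
        refine Finset.sum_congr rfl fun j _ => ?_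
        rw [norm_mul]
        have hac : Ac i j = ((A i j : ℝ) : ℂ) := rfl
        rw [hac, Complex.norm_real, Real.norm_of_nonneg (hnn i j)]
    _ = A.mulVec uv i := h3.symm
  -- the positive eigenvector trick: from a sub-eigenvector inequality, derive equality
  have hw_of : ∀ (s : ℝ) (x : Fin m → ℝ), 0 ≤ s → (∀ i, 0 ≤ x i) → (∃ i, 0 < x i) →
      (∀ i, s * x i ≤ A.mulVec x i) → s ≤ lam := by
    intro s x hs hxnn ⟨ix, hix⟩ hxle
    set w : Fin m → ℝ := (A ^ N).mulVec x with hwdef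
    have hwpos : ∀ i, 0 < w i := by
      intro i
      have h1 : w i = ∑ j, (A ^ N) i j * x j := rfl
      rw [h1]
      refine Finset.sum_pos' (fun j _ => mul_nonneg (hpnn N i j) (hxnn j)) ?_
      exact ⟨ix, Finset.mem_univ ix, mul_pos (hNpos i ix) hix⟩
    have hcomm : A.mulVec w = (A ^ N).mulVec (A.mulVec x) := by
      rw [hwdef, Matrix.mulVec_mulVec, Matrix.mulVec_mulVec, ← pow_succ', ← pow_succ]
    have hwle : ∀ i, s * w i ≤ A.mulVec w i := by
      intro i
      rw [hcomm]
      have h1 : (A ^ N).mulVec (A.mulVec x) i = ∑ j, (A ^ N) i j * (A.mulVec x) j := rfl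
      have h2 : s * w i = ∑ j, (A ^ N) i j * (s * x j) := by
        have : w i = ∑ j, (A ^ N) i j * x j := rfl
        rw [this, Finset.mul_sum]
        exact Finset.sum_congr rfl fun j _ => by ring
      rw [h1, h2]
      exact Finset.sum_le_sum fun j _ =>
        mul_le_mul_of_nonneg_left (hxle j) (hpnn N i j)
    exact hgrow s w hs hwpos hwle
  -- lam is an eigenvalue
  have heig : A.mulVec uv = lam • uv := by
    by_contra hne2
    have hstr : ∃ i1, lam * uv i1 < A.mulVec uv i1 := by
      by_contra hall
      push_neg at hall
      apply hne2
      funext i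
      have : A.mulVec uv i = lam * uv i := le_antisymm (hall i) (htri i)
      simp [this]
    obtain ⟨i1, hi1⟩ := hstr
    set w : Fin m → ℝ := (A ^ N).mulVec uv with hwdef
    have hwpos : ∀ i, 0 < w i := by
      intro i
      have h1 : w i = ∑ j, (A ^ N) i j * uv j := rfl
      rw [h1]
      refine Finset.sum_pos' (fun j _ => mul_nonneg (hpnn N i j) (huvnn j)) ?_
      exact ⟨iw, Finset.mem_univ iw, mul_pos (hNpos i iw) huvpos⟩
    have hcomm : A.mulVec w = (A ^ N).mulVec (A.mulVec uv) := by
      rw [hwdef, Matrix.mulVec_mulVec, Matrix.mulVec_mulVec, ← pow_succ', ← pow_succ]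
    have hstrict : ∀ i, lam * w i < A.mulVec w i := by
      intro i
      rw [hcomm]
      have h1 : (A ^ N).mulVec (A.mulVec uv) i = ∑ j, (A ^ N) i j * (A.mulVec uv) j := rfl
      have h2 : lam * w i = ∑ j, (A ^ N) i j * (lam * uv j) := by
        have : w i = ∑ j, (A ^ N) i j * uv j := rfl
        rw [this, Finset.mul_sum]
        exact Finset.sum_congr rfl fun j _ => by ring
      rw [h1, h2]
      refine Finset.sum_lt_sum (fun j _ =>
        mul_le_mul_of_nonneg_left (htri j) (hpnn N i j)) ?_
      exact ⟨i1, Finset.mem_univ i1,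
        (mul_lt_mul_iff_right₀ (hNpos i i1)).mpr hi1⟩
    obtain ⟨i2, -, hi2⟩ := Finset.exists_min_image Finset.univ
      (fun i : Fin m => A.mulVec w i / w i) Finset.univ_nonempty
    set s : ℝ := A.mulVec w i2 / w i2 with hsdef
    have hslam : lam < s := by
      rw [hsdef, lt_div_iff₀ (hwpos i2)]
      calc lam * w i2 < A.mulVec w i2 := hstrict i2
      _ = A.mulVec w i2 := rfl
    have hsw : ∀ i, s * w i ≤ A.mulVec w i := by
      intro i
      have := hi2 i (Finset.mem_univ i)
      rw [hsdef]
      calc (A.mulVec w i2 / w i2) * w i ≤ (A.mulVec w i / w i) * w i :=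
          mul_le_mul_of_nonneg_right this (hwpos i).le
      _ = A.mulVec w i := div_mul_cancel₀ _ (hwpos i).ne'
    have := hgrow s w (le_trans hlpos.le hslam.le) hwpos hsw
    exact absurd this (not_le.mpr hslam)
  have huvne : uv ≠ 0 := fun h => huvpos.ne' (congr_fun h iw)
  have hmem : lam ∈ spectrum ℝ A := by
    rw [spectrum.mem_iff]
    intro hunit
    have hdet2 : IsUnit (algebraMap ℝ (Matrix (Fin m) (Fin m) ℝ) lam - A).det :=
      (Matrix.isUnit_iff_isUnit_det _).mp hunit
    have hdet0 : (algebraMap ℝ (Matrix (Fin m) (Fin m) ℝ) lam - A).det = 0 := by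
      refine Matrix.exists_mulVec_eq_zero_iff.mp ⟨uv, huvne, ?_⟩
      rw [Matrix.sub_mulVec, Algebra.algebraMap_eq_smul_one, Matrix.smul_mulVec,
        Matrix.one_mulVec, heig, sub_self]
    rw [hdet0] at hdet2
    exact not_isUnit_zero hdet2
  -- every real spectral value has absolute value at most lam
  have hub : ∀ μ ∈ spectrum ℝ A, |μ| ≤ lam := by
    intro μ hμ
    have hdet : (algebraMap ℝ (Matrix (Fin m) (Fin m) ℝ) μ - A).det = 0 := by
      by_contra h
      exact (spectrum.mem_iff.mp hμ)
        ((Matrix.isUnit_iff_isUnit_det _).mpr (isUnit_iff_ne_zero.mpr h))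
    obtain ⟨x, hx0, hxeq⟩ := Matrix.exists_mulVec_eq_zero_iff.mpr hdet
    have hAx : A.mulVec x = μ • x := by
      rw [Matrix.sub_mulVec] at hxeq
      have h2 : (algebraMap ℝ (Matrix (Fin m) (Fin m) ℝ) μ).mulVec x = μ • x := by
        rw [Algebra.algebraMap_eq_smul_one, Matrix.smul_mulVec, Matrix.one_mulVec]
      rw [h2] at hxeq
      exact (sub_eq_zero.mp hxeq).symm
    set ux : Fin m → ℝ := fun i => |x i| with huxdef
    obtain ⟨jx, hjx⟩ : ∃ i, x i ≠ 0 := Function.ne_iff.mp hx0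
    have hjxpos : 0 < ux jx := abs_pos.mpr hjx
    have htri2 : ∀ i, |μ| * ux i ≤ A.mulVec ux i := by
      intro i
      have h1 : (A.mulVec x) i = μ * x i := by rw [hAx]; rfl
      have h2 : (A.mulVec x) i = ∑ j, A i j * x j := rfl
      have h3 : A.mulVec ux i = ∑ j, A i j * ux j := rfl
      calc |μ| * ux i = |μ * x i| := (abs_mul _ _).symm
      _ = |∑ j, A i j * x j| := by rw [← h2, h1]
      _ ≤ ∑ j, |A i j * x j| := Finset.abs_sum_le_sum_abs _ _
      _ = ∑ j, A i j * ux j := by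
          refine Finset.sum_congr rfl fun j _ => ?_
          rw [abs_mul, abs_of_nonneg (hnn i j)]
      _ = A.mulVec ux i := h3.symm
    exact hw_of |μ| ux (abs_nonneg μ) (fun i => abs_nonneg _) ⟨jx, hjxpos⟩ htri2
  -- conclude
  refine ⟨lam, hlpos, hentry, hnormlim, ?_⟩
  apply le_antisymm
  · have h1 : ENNReal.ofReal lam = ((‖lam‖₊ : NNReal) : ENNReal) := by
      rw [← enorm_eq_nnnorm, ← ofReal_norm, Real.norm_of_nonneg hlpos.le]
    rw [h1, spectralRadius]
    exact le_iSup₂ (f := fun k (_ : k ∈ spectrum ℝ A) => ((‖k‖₊ : NNReal) : ENNReal))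
      lam hmem
  · rw [spectralRadius]
    refine iSup₂_le fun μ hμ => ?_
    rw [← enorm_eq_nnnorm, ← ofReal_norm]
    exact ENNReal.ofReal_le_ofReal (le_trans (le_of_eq (Real.norm_eq_abs μ)) (hub μ hμ))

end
end

section
/- Let f : ℂ → ℂ be any function and S ⊆ ℂ a finite set. Define the exceptional set E = { z ∈ ℂ : there exists ε > 0 such that for infinitely many n ∈ ℕ there exist j with 1 ≤ j ≤ n and c ∈ S with dist(z, f^[j] c) < exp(−n·ε) }. Then the Hausdorff dimension of E is zero: dimH E = 0. (Equivalently: the set of points of ℂ that are not non-exceptional for f, with Crit(f) replaced by S, has Hausdorff dimension 0.) -/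
open Filter Metric Set MeasureTheory NNReal ENNReal

noncomputable section

theorem hausdorff_eps_ne_top (f : ℂ → ℂ) (S : Set ℂ) (hS : S.Finite) {ε : ℝ} (hε : 0 < ε)
    {d : ℝ≥0} (hd : 0 < d) :
    (μH[(d:ℝ)] : MeasureTheory.Measure ℂ)
      {z : ℂ | ∀ N : ℕ, ∃ n ≥ N, ∃ j, 1 ≤ j ∧ j ≤ n ∧ ∃ c ∈ S,
        dist z (f^[j] c) < Real.exp (-(n : ℝ) * ε)} ≠ ⊤ := by
  haveI : Countable ↥S := hS.countable.to_subtype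
  haveI : Fintype ↥S := hS.fintype
  set E := {z : ℂ | ∀ N : ℕ, ∃ n ≥ N, ∃ j, 1 ≤ j ∧ j ≤ n ∧ ∃ c ∈ S,
        dist z (f^[j] c) < Real.exp (-(n : ℝ) * ε)} with hE
  set t : ℕ → ℕ × ℕ × ↥S → Set ℂ := fun N i =>
    if 1 ≤ i.2.1 ∧ i.2.1 ≤ N + i.1 then
      Metric.closedBall (f^[i.2.1] i.2.2) (Real.exp (-((N + i.1 : ℕ) : ℝ) * ε)) else ∅ with ht_def
  have hball : ∀ (x : ℂ) (R : ℝ), EMetric.diam (Metric.closedBall x R) ≤ ENNReal.ofReal (2 * R) := by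
    intro x R
    refine EMetric.diam_le fun a ha b hb => ?_
    rw [edist_dist]
    refine ENNReal.ofReal_le_ofReal ?_
    calc dist a b ≤ dist a x + dist b x := dist_triangle_right _ _ _
      _ ≤ _ := by
          have h1 := mem_closedBall.1 ha
          have h2 := mem_closedBall.1 hb
          linarith
  have hdiam : ∀ (N : ℕ) (i : ℕ × ℕ × ↥S),
      EMetric.diam (t N i) ≤ ENNReal.ofReal (2 * Real.exp (-((N + i.1 : ℕ) : ℝ) * ε)) := by
    intro N i
    rw [ht_def]
    dsimp only
    split_ifs with h
    · exact hball _ _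
    · simp [EMetric.diam]
  have hdiam2 : ∀ (N : ℕ) (i : ℕ × ℕ × ↥S),
      EMetric.diam (t N i) ≤ ENNReal.ofReal (2 * Real.exp (-(N : ℝ) * ε)) := by
    intro N i
    refine (hdiam N i).trans (ENNReal.ofReal_le_ofReal ?_)
    have : -((N + i.1 : ℕ) : ℝ) * ε ≤ -(N : ℝ) * ε := by
      have : (N : ℝ) ≤ ((N + i.1 : ℕ) : ℝ) := by push_cast; linarith [Nat.cast_nonneg (α := ℝ) i.1]
      nlinarith
    have := Real.exp_le_exp.2 this
    linarith
  have key : (μH[(d:ℝ)] : MeasureTheory.Measure ℂ) E ≤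
      ∑' i : ℕ × ℕ × ↥S, (if 1 ≤ i.2.1 ∧ i.2.1 ≤ i.1 then
        ENNReal.ofReal ((2 * Real.exp (-(i.1 : ℝ) * ε)) ^ (d : ℝ)) else 0) := by
    set g : ℕ × ℕ × ↥S → ℝ≥0∞ := fun i =>
      if 1 ≤ i.2.1 ∧ i.2.1 ≤ i.1 then
        ENNReal.ofReal ((2 * Real.exp (-(i.1 : ℝ) * ε)) ^ (d : ℝ)) else 0 with hg
    have main := MeasureTheory.Measure.hausdorffMeasure_le_liminf_tsum (d : ℝ) E (l := atTop)
      (fun N : ℕ => ENNReal.ofReal (2 * Real.exp (-(N : ℝ) * ε))) ?_ t ?_ ?_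
    · refine main.trans ?_
      have hbound : ∀ N : ℕ,
          (∑' i : ℕ × ℕ × ↥S, EMetric.diam (t N i) ^ (d : ℝ)) ≤ ∑' i, g i := by
        intro N
        have step1 : ∀ i : ℕ × ℕ × ↥S,
            EMetric.diam (t N i) ^ (d : ℝ) ≤ g (N + i.1, i.2.1, i.2.2) := by
          intro i
          rw [ht_def, hg]
          dsimp only
          split_ifs with h
          · refine le_trans (ENNReal.rpow_le_rpow (hball _ _) (by positivity)) ?_
            rw [ENNReal.ofReal_rpow_of_pos (by positivity)]
          · simp [EMetric.diam, hd, ENNReal.zero_rpow_of_pos (show (0:ℝ) < (d:ℝ) from by exact_mod_cast hd)]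
        calc ∑' i, EMetric.diam (t N i) ^ (d : ℝ)
            ≤ ∑' i : ℕ × ℕ × ↥S, g (N + i.1, i.2.1, i.2.2) := ENNReal.tsum_le_tsum step1
          _ ≤ ∑' i, g i := by
              exact tsum_comp_le_tsum_of_injective
                (f := fun i : ℕ × ℕ × ↥S => (N + i.1, i.2.1, i.2.2)) (fun a b hab => by
                  simp only [Prod.mk.injEq] at hab
                  obtain ⟨h1, h2, h3⟩ := hab
                  exact Prod.ext (by omega) (Prod.ext h2 h3)) g
      calc liminf (fun N => ∑' i, EMetric.diam (t N i) ^ (d : ℝ)) atTop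
          ≤ liminf (fun _ => ∑' i, g i) atTop := liminf_le_liminf (Eventually.of_forall hbound)
        _ = ∑' i, g i := liminf_const _
    · -- r N → 0
      have h1 : Tendsto (fun N : ℕ => 2 * Real.exp (-(N : ℝ) * ε)) atTop (nhds 0) := by
        have : Tendsto (fun N : ℕ => Real.exp (-(N : ℝ) * ε)) atTop (nhds 0) := by
          have heq : ∀ N : ℕ, Real.exp (-(N : ℝ) * ε) = Real.exp (-ε) ^ N := fun N => by
            rw [← Real.exp_nat_mul]; ring_nf
          simp only [heq]
          exact tendsto_pow_atTop_nhds_zero_of_lt_one (Real.exp_pos _).le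
            (Real.exp_lt_one_iff.2 (by linarith))
        simpa using this.const_mul 2
      have := ENNReal.tendsto_ofReal h1
      simpa using this
    · exact Eventually.of_forall hdiam2
    · -- cover
      refine Eventually.of_forall fun N z hz => ?_
      obtain ⟨n, hn, j, hj1, hjn, c, hc, hd'⟩ := hz N
      refine mem_iUnion.2 ⟨(n - N, j, ⟨c, hc⟩), ?_⟩
      rw [ht_def]
      dsimp only
      have hNn : N + (n - N) = n := by omega
      rw [hNn, if_pos ⟨hj1, hjn⟩]
      exact mem_closedBall.2 hd'.le
  have hεd : 0 < ε * (d : ℝ) := mul_pos hε (by exact_mod_cast hd)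
  set q : ℝ := Real.exp (-(ε * (d : ℝ))) with hq_def
  have hq0 : 0 < q := Real.exp_pos _
  have hq1 : q < 1 := Real.exp_lt_one_iff.2 (by linarith)
  set CC : ℝ := (Fintype.card ↥S : ℝ) * 2 ^ (d : ℝ) with hCC_def
  have hCC0 : 0 ≤ CC := by positivity
  have hsum : Summable (fun n : ℕ => CC * ((n : ℝ) * q ^ n)) := by
    have := summable_pow_mul_geometric_of_norm_lt_one (R := ℝ) 1
      (r := q) (by rw [Real.norm_eq_abs, abs_of_pos hq0]; exact hq1)
    simpa [pow_one] using this.mul_left CC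
  have hreal : ∀ n : ℕ, (Fintype.card ↥S : ℝ) * ((n : ℝ) * (2 * Real.exp (-(n : ℝ) * ε)) ^ (d : ℝ))
      = CC * ((n : ℝ) * q ^ n) := by
    intro n
    rw [hCC_def, hq_def, Real.mul_rpow (by norm_num) (Real.exp_pos _).le,
      ← Real.exp_mul, ← Real.exp_nat_mul]
    ring_nf
  have hinner : ∀ n : ℕ,
      (∑' p : ℕ × ↥S, (if 1 ≤ p.1 ∧ p.1 ≤ n then
        ENNReal.ofReal ((2 * Real.exp (-(n : ℝ) * ε)) ^ (d : ℝ)) else 0))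
        ≤ ENNReal.ofReal (CC * ((n : ℝ) * q ^ n)) := by
    intro n
    set a : ℝ≥0∞ := ENNReal.ofReal ((2 * Real.exp (-(n : ℝ) * ε)) ^ (d : ℝ)) with ha_def
    have step : (∑' p : ℕ × ↥S, (if 1 ≤ p.1 ∧ p.1 ≤ n then a else 0))
        = (Fintype.card ↥S : ℝ≥0∞) * ((n : ℝ≥0∞) * a) := by
      rw [ENNReal.tsum_prod (f := fun (j : ℕ) (_ : ↥S) => if 1 ≤ j ∧ j ≤ n then a else 0)]
      have h1 : ∀ j : ℕ, (∑' _ : ↥S, (if 1 ≤ j ∧ j ≤ n then a else 0))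
          = (Fintype.card ↥S : ℝ≥0∞) * (if 1 ≤ j ∧ j ≤ n then a else 0) := by
        intro j
        rw [tsum_fintype]
        simp [Finset.sum_const, nsmul_eq_mul]
      simp only [h1]
      rw [ENNReal.tsum_mul_left]
      congr 1
      rw [tsum_eq_sum (s := Finset.Icc 1 n) (fun j hj => if_neg (by
        simp only [Finset.mem_Icc] at hj; omega))]
      rw [Finset.sum_congr rfl (fun j hj => if_pos (by
        simpa only [Finset.mem_Icc] using hj))]
      simp [Nat.card_Icc, nsmul_eq_mul]
    rw [step, ha_def]
    rw [← hreal n, ENNReal.ofReal_mul (by positivity), ENNReal.ofReal_mul (Nat.cast_nonneg n),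
      ENNReal.ofReal_natCast, ENNReal.ofReal_natCast]
  have hC : (∑' i : ℕ × ℕ × ↥S, (if 1 ≤ i.2.1 ∧ i.2.1 ≤ i.1 then
        ENNReal.ofReal ((2 * Real.exp (-(i.1 : ℝ) * ε)) ^ (d : ℝ)) else 0))
      ≤ ENNReal.ofReal (∑' n : ℕ, CC * ((n : ℝ) * q ^ n)) :=
  calc (∑' i : ℕ × ℕ × ↥S, (if 1 ≤ i.2.1 ∧ i.2.1 ≤ i.1 then
        ENNReal.ofReal ((2 * Real.exp (-(i.1 : ℝ) * ε)) ^ (d : ℝ)) else 0))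
      = ∑' n : ℕ, ∑' p : ℕ × ↥S, (if 1 ≤ p.1 ∧ p.1 ≤ n then
        ENNReal.ofReal ((2 * Real.exp (-(n : ℝ) * ε)) ^ (d : ℝ)) else 0) :=
        ENNReal.tsum_prod (f := fun (n : ℕ) (p : ℕ × ↥S) => if 1 ≤ p.1 ∧ p.1 ≤ n then
          ENNReal.ofReal ((2 * Real.exp (-(n : ℝ) * ε)) ^ (d : ℝ)) else 0)
    _ ≤ ∑' n : ℕ, ENNReal.ofReal (CC * ((n : ℝ) * q ^ n)) := ENNReal.tsum_le_tsum hinner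
    _ = ENNReal.ofReal (∑' n : ℕ, CC * ((n : ℝ) * q ^ n)) :=
        (ENNReal.ofReal_tsum_of_nonneg (fun n => by positivity) hsum).symm
  exact ne_top_of_le_ne_top ENNReal.ofReal_ne_top (key.trans hC)

/-- for any map `f : ℂ → ℂ` and any finite set `S ⊆ ℂ`, the exceptional set
`E = {z | ∃ ε > 0, for infinitely many n there are 1 ≤ j ≤ n and c ∈ S with
dist(z, f^[j] c) < exp(−n·ε)}` has Hausdorff dimension zero. -/
theorem dimH_exceptional_eq_zero (f : ℂ → ℂ) (S : Set ℂ) (hS : S.Finite) :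
    dimH {z : ℂ | ∃ ε > 0, ∀ N : ℕ, ∃ n ≥ N, ∃ j, 1 ≤ j ∧ j ≤ n ∧ ∃ c ∈ S,
      dist z (f^[j] c) < Real.exp (-(n : ℝ) * ε)} = 0 := by
  have hEps : ∀ ε : ℝ, 0 < ε → dimH {z : ℂ | ∀ N : ℕ, ∃ n ≥ N, ∃ j, 1 ≤ j ∧ j ≤ n ∧ ∃ c ∈ S,
      dist z (f^[j] c) < Real.exp (-(n : ℝ) * ε)} = 0 := by
    intro ε hε
    refine le_antisymm ?_ zero_le
    refine ENNReal.le_of_forall_pos_le_add fun d hd _ => ?_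
    rw [zero_add]
    exact dimH_le_of_hausdorffMeasure_ne_top (hausdorff_eps_ne_top f S hS hε hd)
  have hsub : {z : ℂ | ∃ ε > 0, ∀ N : ℕ, ∃ n ≥ N, ∃ j, 1 ≤ j ∧ j ≤ n ∧ ∃ c ∈ S,
      dist z (f^[j] c) < Real.exp (-(n : ℝ) * ε)} ⊆
      ⋃ k : ℕ, {z : ℂ | ∀ N : ℕ, ∃ n ≥ N, ∃ j, 1 ≤ j ∧ j ≤ n ∧ ∃ c ∈ S,
      dist z (f^[j] c) < Real.exp (-(n : ℝ) * (1 / ((k : ℝ) + 1)))} := by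
    rintro z ⟨ε, hε, hz⟩
    obtain ⟨k, hk⟩ := exists_nat_one_div_lt hε
    refine mem_iUnion.2 ⟨k, fun N => ?_⟩
    obtain ⟨n, hn, j, hj1, hjn, c, hc, hd⟩ := hz N
    refine ⟨n, hn, j, hj1, hjn, c, hc, hd.trans_le (Real.exp_le_exp.2 ?_)⟩
    have h1 : (0 : ℝ) ≤ (n : ℝ) := Nat.cast_nonneg n
    nlinarith [hk.le]
  refine le_antisymm ((dimH_mono hsub).trans ?_) zero_le
  rw [dimH_iUnion]
  exact le_of_eq (iSup_eq_zero.2 fun k => hEps _ (by positivity))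

end
end
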